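/- arXiv:math/9910168 — 8 statements merged into one kernel-verified Lean document; each statement's English description precedes it below -/
import Mathlib

section
/- Let (f_n)_{n∈ℕ} be a frame for a separable complex Hilbert space H and fix an index m. Then either the sequence (f_n)_{n≠m} is again a frame for H, or (f_n)_{n≠m} is incomplete, i.e., the closure of its linear span is a proper subspace of H. -/
noncomputable section

/-- Removing one vector from a frame leaves either a frame for `H` or an
incomplete set (its closed linear span is a proper subspace of `H`). -/
theorem frame_remove_one
    {H : Type} [NormedAddCommGroup H] [InnerProductSpace ℂ H] [CompleteSpace H]
    [SecondCountableTopology H] (f : ℕ → H) (A B : ℝ) (hA : 0 < A) (hB : 0 < B)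
    (hframe : ∀ x : H,
      A * ‖x‖ ^ 2 ≤ ∑' n, ‖(inner ℂ x (f n) : ℂ)‖ ^ 2 ∧
      ∑' n, ‖(inner ℂ x (f n) : ℂ)‖ ^ 2 ≤ B * ‖x‖ ^ 2)
    (m : ℕ) :
    (∃ A' B' : ℝ, 0 < A' ∧ 0 < B' ∧ ∀ x : H,
      A' * ‖x‖ ^ 2 ≤ ∑' n : {n : ℕ // n ≠ m}, ‖(inner ℂ x (f n) : ℂ)‖ ^ 2 ∧
      ∑' n : {n : ℕ // n ≠ m}, ‖(inner ℂ x (f n) : ℂ)‖ ^ 2 ≤ B' * ‖x‖ ^ 2) ∨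
    (Submodule.span ℂ (f '' {n : ℕ | n ≠ m})).topologicalClosure ≠ ⊤ := by
  classical
  -- summability of the frame coefficients
  have hsum : ∀ x : H, Summable (fun n => ‖(inner ℂ x (f n) : ℂ)‖ ^ 2) := by
    intro x
    by_contra h
    have h0 : ∑' n, ‖(inner ℂ x (f n) : ℂ)‖ ^ 2 = 0 := tsum_eq_zero_of_not_summable h
    have hx := (hframe x).1
    rw [h0] at hx
    have hx2 : ‖x‖ ^ 2 ≤ 0 := by nlinarith
    have hx0 : x = 0 := by
      have : ‖x‖ = 0 := by nlinarith [norm_nonneg x]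
      simpa using this
    subst hx0
    exact h (by simpa using summable_zero)
  have hsumsub : ∀ x : H,
      Summable (fun n : {n : ℕ // n ≠ m} => ‖(inner ℂ x (f (n : ℕ)) : ℂ)‖ ^ 2) := by
    intro x
    exact (hsum x).subtype _
  have hrest_nonneg : ∀ x : H,
      (0:ℝ) ≤ ∑' n : {n : ℕ // n ≠ m}, ‖(inner ℂ x (f (n:ℕ)) : ℂ)‖ ^ 2 := by
    intro x; exact tsum_nonneg fun _ => by positivity
  -- splitting the full sum
  have hsub : ∀ x : H,
      ∑' n : {n : ℕ // n ≠ m}, ‖(inner ℂ x (f (n:ℕ)) : ℂ)‖ ^ 2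
        = ∑' n : ℕ, (if n = m then 0 else ‖(inner ℂ x (f n) : ℂ)‖ ^ 2) := by
    intro x
    refine (tsum_subtype {n : ℕ | n ≠ m} (fun n => ‖(inner ℂ x (f n) : ℂ)‖ ^ 2)).trans ?_
    congr 1
    funext n
    by_cases h : n = m <;> simp [Set.indicator, h]
  have hsplit : ∀ x : H,
      ∑' n, ‖(inner ℂ x (f n) : ℂ)‖ ^ 2
        = ‖(inner ℂ x (f m) : ℂ)‖ ^ 2
          + ∑' n : {n : ℕ // n ≠ m}, ‖(inner ℂ x (f (n:ℕ)) : ℂ)‖ ^ 2 := by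
    intro x
    rw [hsub x, (hsum x).tsum_eq_add_tsum_ite m]
  -- main dichotomy: does there exist a vector orthogonal to all f n (n ≠ m)
  -- with inner ℂ product 1 against f m?
  by_cases hg : ∃ g : H, (inner ℂ g (f m) : ℂ) = 1 ∧ ∀ n : ℕ, n ≠ m → (inner ℂ g (f n) : ℂ) = 0
  · -- incomplete case
    right
    obtain ⟨g, hg1, hg0⟩ := hg
    intro htop
    have horth : g ∈ (Submodule.span ℂ (f '' {n : ℕ | n ≠ m}))ᗮ := by
      rw [Submodule.mem_orthogonal]
      intro u hu
      induction hu using Submodule.span_induction with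
      | mem u hu =>
          obtain ⟨n, hn, rfl⟩ := hu
          rw [inner_eq_zero_symm]
          exact hg0 n hn
      | zero => simp
      | add u v _ _ hu hv => rw [inner_add_left, hu, hv, add_zero]
      | smul a u _ hu => rw [inner_smul_left, hu, mul_zero]
    rw [Submodule.topologicalClosure_eq_top_iff] at htop
    rw [htop, Submodule.mem_bot] at horth
    rw [horth, inner_zero_left] at hg1
    exact one_ne_zero hg1.symm
  · -- frame case
    left
    have key : ∃ C : ℝ, 0 < C ∧ ∀ x : H,
        ‖(inner ℂ x (f m) : ℂ)‖ ^ 2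
          ≤ C * ∑' n : {n : ℕ // n ≠ m}, ‖(inner ℂ x (f (n:ℕ)) : ℂ)‖ ^ 2 := by
      by_contra hk
      push_neg at hk
      choose y hy using fun k : ℕ => hk ((k:ℝ)+1) (by positivity)
      -- normalize
      have hy0 : ∀ k : ℕ, (inner ℂ (y k) (f m) : ℂ) ≠ 0 := by
        intro k hc
        have := hy k
        rw [hc] at this
        simp only [norm_zero] at this
        nlinarith [hrest_nonneg (y k), this]
      set z : ℕ → H := fun k => ((starRingEnd ℂ) (inner ℂ (y k) (f m)))⁻¹ • y k with hz
      have hzn : ∀ k n, (inner ℂ (z k) (f n) : ℂ)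
          = (inner ℂ (y k) (f m) : ℂ)⁻¹ * inner ℂ (y k) (f n) := by
        intro k n
        rw [hz]
        simp only [inner_smul_left, map_inv₀, RingHom.id_apply]
        rw [RingHomCompTriple.comp_apply]
        simp
      have hz1 : ∀ k, (inner ℂ (z k) (f m) : ℂ) = 1 := by
        intro k
        rw [hzn k m, inv_mul_cancel₀ (hy0 k)]
      have hzrest : ∀ k : ℕ,
          (∑' n : {n : ℕ // n ≠ m}, ‖(inner ℂ (z k) (f (n:ℕ)) : ℂ)‖ ^ 2)
            ≤ 1 / ((k:ℝ)+1) := by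
        intro k
        have h1 : (∑' n : {n : ℕ // n ≠ m}, ‖(inner ℂ (z k) (f (n:ℕ)) : ℂ)‖ ^ 2)
            = ‖(inner ℂ (y k) (f m) : ℂ)‖⁻¹ ^ 2
              * ∑' n : {n : ℕ // n ≠ m}, ‖(inner ℂ (y k) (f (n:ℕ)) : ℂ)‖ ^ 2 := by
          rw [← tsum_mul_left]
          congr 1
          funext n
          rw [hzn k n, norm_mul, mul_pow, norm_inv]
        rw [h1]
        have hc : (0:ℝ) < ‖(inner ℂ (y k) (f m) : ℂ)‖ := norm_pos_iff.mpr (hy0 k)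
        have h2 := hy k
        rw [le_div_iff₀ (by positivity : (0:ℝ) < (k:ℝ)+1)]
        have e : ‖(inner ℂ (y k) (f m) : ℂ)‖⁻¹ ^ 2 * ‖(inner ℂ (y k) (f m) : ℂ)‖ ^ 2 = 1 := by
          rw [inv_pow]
          exact inv_mul_cancel₀ (by positivity)
        have h3 := mul_le_mul_of_nonneg_left h2.le
          (by positivity : (0:ℝ) ≤ ‖(inner ℂ (y k) (f m) : ℂ)‖⁻¹ ^ 2)
        nlinarith [h3, e]
      have aux : ∀ a b : ℂ, ‖a - b‖ ^ 2 ≤ 2 * ‖a‖ ^ 2 + 2 * ‖b‖ ^ 2 := by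
        intro a b
        have h := norm_sub_le a b
        nlinarith [sq_nonneg (‖a‖ - ‖b‖),
          mul_le_mul h h (norm_nonneg (a - b)) (add_nonneg (norm_nonneg a) (norm_nonneg b))]
      have hdiff : ∀ j k : ℕ, A * ‖z j - z k‖ ^ 2 ≤ 2 / ((j:ℝ)+1) + 2 / ((k:ℝ)+1) := by
        intro j k
        have h1 := (hframe (z j - z k)).1
        rw [hsplit (z j - z k)] at h1
        have hm : ‖(inner ℂ (z j - z k) (f m) : ℂ)‖ ^ 2 = 0 := by
          rw [inner_sub_left, hz1 j, hz1 k]; simp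
        have hrest : ∑' n : {n : ℕ // n ≠ m}, ‖(inner ℂ (z j - z k) (f (n:ℕ)) : ℂ)‖ ^ 2
            ≤ 2 / ((j:ℝ)+1) + 2 / ((k:ℝ)+1) := by
          have hle : ∀ n : {n : ℕ // n ≠ m},
              ‖(inner ℂ (z j - z k) (f (n:ℕ)) : ℂ)‖ ^ 2
                ≤ 2 * ‖(inner ℂ (z j) (f (n:ℕ)) : ℂ)‖ ^ 2
                  + 2 * ‖(inner ℂ (z k) (f (n:ℕ)) : ℂ)‖ ^ 2 := by
            intro n
            rw [inner_sub_left]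
            exact aux _ _
          have hS : Summable (fun n : {n : ℕ // n ≠ m} =>
              2 * ‖(inner ℂ (z j) (f (n:ℕ)) : ℂ)‖ ^ 2
                + 2 * ‖(inner ℂ (z k) (f (n:ℕ)) : ℂ)‖ ^ 2) :=
            ((hsumsub (z j)).mul_left 2).add ((hsumsub (z k)).mul_left 2)
          have step := Summable.tsum_le_tsum hle (hsumsub (z j - z k)) hS
          have split2 : ∑' n : {n : ℕ // n ≠ m},
              (2 * ‖(inner ℂ (z j) (f (n:ℕ)) : ℂ)‖ ^ 2
                + 2 * ‖(inner ℂ (z k) (f (n:ℕ)) : ℂ)‖ ^ 2)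
              = 2 * (∑' n : {n : ℕ // n ≠ m}, ‖(inner ℂ (z j) (f (n:ℕ)) : ℂ)‖ ^ 2)
                + 2 * (∑' n : {n : ℕ // n ≠ m}, ‖(inner ℂ (z k) (f (n:ℕ)) : ℂ)‖ ^ 2) := by
            rw [Summable.tsum_add ((hsumsub (z j)).mul_left 2) ((hsumsub (z k)).mul_left 2),
              tsum_mul_left, tsum_mul_left]
          rw [split2] at step
          have hzj := hzrest j
          have hzk := hzrest k
          have e1 : 2 * (1 / ((j:ℝ)+1)) = 2 / ((j:ℝ)+1) := by ring
          have e2 : 2 * (1 / ((k:ℝ)+1)) = 2 / ((k:ℝ)+1) := by ring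
          nlinarith [step]
        nlinarith [h1, hm, hrest]
      have hcauchy : CauchySeq z := by
        apply cauchySeq_of_le_tendsto_0 (fun N : ℕ => Real.sqrt (4 / (A * ((N:ℝ)+1))))
        · intro j k N hjN hkN
          rw [dist_eq_norm]
          have h4 : ‖z j - z k‖ ^ 2 ≤ 4 / (A * ((N:ℝ)+1)) := by
            have hd := hdiff j k
            have hj1 : 2 / ((j:ℝ)+1) ≤ 2 / ((N:ℝ)+1) := by
              apply div_le_div_of_nonneg_left (by norm_num) (by positivity)
              have : ((N:ℝ)) ≤ (j:ℝ) := by exact_mod_cast hjN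
              linarith
            have hk1 : 2 / ((k:ℝ)+1) ≤ 2 / ((N:ℝ)+1) := by
              apply div_le_div_of_nonneg_left (by norm_num) (by positivity)
              have : ((N:ℝ)) ≤ (k:ℝ) := by exact_mod_cast hkN
              linarith
            rw [le_div_iff₀ (by positivity : (0:ℝ) < A * ((N:ℝ)+1))]
            have hN1 : (0:ℝ) < (N:ℝ)+1 := by positivity
            have h5 : A * ‖z j - z k‖ ^ 2 ≤ 4 / ((N:ℝ)+1) := by
              have : 2 / ((N:ℝ)+1) + 2 / ((N:ℝ)+1) = 4 / ((N:ℝ)+1) := by ring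
              linarith
            rw [div_eq_mul_inv] at h5
            have h6 := mul_le_mul_of_nonneg_left h5 hN1.le
            have e3 : ((N:ℝ)+1) * (4 * ((N:ℝ)+1)⁻¹) = 4 := by
              field_simp
            nlinarith [h6, e3]
          calc ‖z j - z k‖ = Real.sqrt (‖z j - z k‖ ^ 2) :=
                (Real.sqrt_sq (norm_nonneg _)).symm
            _ ≤ Real.sqrt (4 / (A * ((N:ℝ)+1))) := Real.sqrt_le_sqrt h4
        · have h0 := tendsto_one_div_add_atTop_nhds_zero_nat.const_mul (4/A)
          rw [mul_zero] at h0
          have h1 : Filter.Tendsto (fun N : ℕ => 4 / (A * ((N:ℝ)+1)))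
              Filter.atTop (nhds 0) := by
            refine h0.congr fun N => ?_
            rw [div_mul_div_comm, mul_one]
          simpa using h1.sqrt
      obtain ⟨g, hgl⟩ := cauchySeq_tendsto_of_complete hcauchy
      apply hg
      refine ⟨g, ?_, ?_⟩
      · have ht : Filter.Tendsto (fun k => (inner ℂ (z k) (f m) : ℂ))
            Filter.atTop (nhds (inner ℂ g (f m))) := hgl.inner tendsto_const_nhds
        have ht' : Filter.Tendsto (fun _ : ℕ => (1:ℂ))
            Filter.atTop (nhds (inner ℂ g (f m))) := by
          refine ht.congr fun k => ?_
          rw [hz1 k]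
        exact tendsto_nhds_unique ht' tendsto_const_nhds
      · intro n hn
        have ht : Filter.Tendsto (fun k => (inner ℂ (z k) (f n) : ℂ))
            Filter.atTop (nhds (inner ℂ g (f n))) := hgl.inner tendsto_const_nhds
        have ht0 : Filter.Tendsto (fun k => (inner ℂ (z k) (f n) : ℂ))
            Filter.atTop (nhds 0) := by
          rw [tendsto_zero_iff_norm_tendsto_zero]
          apply squeeze_zero (fun k => norm_nonneg _)
            (g := fun k : ℕ => Real.sqrt (1 / ((k:ℝ)+1)))
          · intro k
            have hb : ‖(inner ℂ (z k) (f n) : ℂ)‖ ^ 2 ≤ 1 / ((k:ℝ)+1) :=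
              le_trans (Summable.le_tsum (hsumsub (z k)) ⟨n, hn⟩ fun j _ => by positivity)
                (hzrest k)
            calc ‖(inner ℂ (z k) (f n) : ℂ)‖
                = Real.sqrt (‖(inner ℂ (z k) (f n) : ℂ)‖ ^ 2) :=
                  (Real.sqrt_sq (norm_nonneg _)).symm
              _ ≤ Real.sqrt (1 / ((k:ℝ)+1)) := Real.sqrt_le_sqrt hb
          · simpa using tendsto_one_div_add_atTop_nhds_zero_nat.sqrt
        exact tendsto_nhds_unique ht ht0
    obtain ⟨C, hC0, hCle⟩ := key
    refine ⟨A/(C+1), B, by positivity, hB, fun x => ⟨?_, ?_⟩⟩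
    · have h1 := (hframe x).1
      rw [hsplit x] at h1
      have h2 := hCle x
      rw [div_mul_eq_mul_div, div_le_iff₀ (by positivity)]
      nlinarith [hrest_nonneg x]
    · have h1 := (hframe x).2
      rw [hsplit x] at h1
      nlinarith [sq_nonneg ‖(inner ℂ x (f m) : ℂ)‖]
end
end

section
/- Let (f_n)_{n∈ℕ} be a frame for a separable complex Hilbert space H with frame operator S, let f ∈ H, and let c_n = ⟨S⁻¹ f, f_n⟩ be the frame coefficients of f. If (b_n)_{n∈ℕ} is any sequence of complex scalars such that f = ∑_n b_n f_n (the series converges to f in H), then ∑_n |b_n|² = ∑_n |c_n|² + ∑_n |c_n − b_n|² (an identity in [0, ∞]). In particular, the frame coefficients have minimal ℓ²-norm among all representations of f. -/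
noncomputable section

lemma sq_norm_add_le' (u v : ℂ) : ‖u + v‖ ^ 2 ≤ 2 * ‖u‖ ^ 2 + 2 * ‖v‖ ^ 2 := by
  have h1 := norm_add_le u v
  have h2 : ‖u + v‖ ^ 2 ≤ (‖u‖ + ‖v‖) ^ 2 := by
    have := norm_nonneg (u + v)
    nlinarith
  nlinarith [sq_nonneg (‖u‖ - ‖v‖)]

/-- Duffin–Schaeffer minimality of the frame coefficients: if `(fₙ)` is a frame
with frame operator `S`, `cₙ = ⟨S⁻¹x, fₙ⟩` are the frame coefficients of `x`,
and `x = ∑ₙ bₙ fₙ` for some scalars `(bₙ)`, then (as an identity in `[0,∞]`)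
`∑ₙ |bₙ|² = ∑ₙ |cₙ|² + ∑ₙ |cₙ - bₙ|²`. -/
theorem frame_coefficients_minimal
    {H : Type} [NormedAddCommGroup H] [InnerProductSpace ℂ H] [CompleteSpace H]
    [SecondCountableTopology H] (f : ℕ → H) (A B : ℝ) (hA : 0 < A) (hB : 0 < B)
    (hframe : ∀ x : H,
      A * ‖x‖ ^ 2 ≤ ∑' n, ‖(inner ℂ x (f n) : ℂ)‖ ^ 2 ∧
      ∑' n, ‖(inner ℂ x (f n) : ℂ)‖ ^ 2 ≤ B * ‖x‖ ^ 2)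
    (S : H ≃L[ℂ] H)
    (hS : ∀ x : H, HasSum (fun n : ℕ => (inner ℂ (f n) x : ℂ) • f n) (S x))
    (x : H) (c : ℕ → ℂ) (hc : ∀ n : ℕ, c n = (inner ℂ (f n) (S.symm x) : ℂ))
    (b : ℕ → ℂ) (hb : HasSum (fun n : ℕ => b n • f n) x) :
    ∑' n, ENNReal.ofReal (‖b n‖ ^ 2) =
      ∑' n, ENNReal.ofReal (‖c n‖ ^ 2) +
      ∑' n, ENNReal.ofReal (‖c n - b n‖ ^ 2) := by
  set g := S.symm x with hg
  have hSg : S g = x := S.apply_symm_apply x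
  have h1 : HasSum (fun n => ((‖c n‖ ^ 2 : ℝ) : ℂ)) (inner ℂ g x : ℂ) := by
    have h := (innerSL ℂ g).hasSum (hS g)
    rw [hSg] at h
    convert h using 2 with n
    case e'_3 => rfl
    case e'_6 => rfl
    simp only [innerSL_apply_apply, inner_smul_right, hc n]
    rw [show (inner ℂ g (f n) : ℂ) = (starRingEnd ℂ) (inner ℂ (f n) g) from (inner_conj_symm g (f n)).symm,
      Complex.mul_conj, Complex.sq_norm]
  have h2 : HasSum (fun n => b n * (starRingEnd ℂ) (c n)) (inner ℂ g x : ℂ) := by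
    have h := (innerSL ℂ g).hasSum hb
    convert h using 2 with n
    case e'_3 => rfl
    case e'_6 => rfl
    simp only [innerSL_apply_apply, inner_smul_right, hc n]
    rw [inner_conj_symm]
  have h1re : HasSum (fun n => ‖c n‖ ^ 2) (inner ℂ g x : ℂ).re := by
    simpa only [Complex.ofReal_re] using Complex.hasSum_re h1
  have h2re : HasSum (fun n => (b n * (starRingEnd ℂ) (c n)).re) (inner ℂ g x : ℂ).re :=
    Complex.hasSum_re h2
  have hcsq : Summable (fun n => ‖c n‖ ^ 2) := h1re.summable
  have e : ∀ z : ℂ, ‖z‖ ^ 2 = Complex.normSq z := fun z => by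
    rw [Complex.sq_norm]
  have hkey : ∀ n, ‖c n - b n‖ ^ 2 =
      ‖c n‖ ^ 2 + ‖b n‖ ^ 2 - 2 * (b n * (starRingEnd ℂ) (c n)).re := by
    intro n
    rw [e, e, e]
    simp only [Complex.normSq_apply, Complex.sub_re, Complex.sub_im, Complex.mul_re,
      Complex.conj_re, Complex.conj_im]
    ring
  by_cases hb2 : Summable (fun n => ‖b n‖ ^ 2)
  · have h := (h1re.add hb2.hasSum).sub (h2re.mul_left 2)
    have heq : (fun n => ‖c n‖ ^ 2 + ‖b n‖ ^ 2 - 2 * (b n * (starRingEnd ℂ) (c n)).re)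
        = fun n => ‖c n - b n‖ ^ 2 := funext fun n => (hkey n).symm
    have hd : HasSum (fun n => ‖c n - b n‖ ^ 2)
        ((inner ℂ g x : ℂ).re + (∑' n, ‖b n‖ ^ 2) - 2 * (inner ℂ g x : ℂ).re) := by
      rw [← heq]; exact h
    have hcd : Summable (fun n => ‖c n - b n‖ ^ 2) := hd.summable
    rw [← ENNReal.ofReal_tsum_of_nonneg (fun n => sq_nonneg _) hb2,
        ← ENNReal.ofReal_tsum_of_nonneg (fun n => sq_nonneg _) hcsq,
        ← ENNReal.ofReal_tsum_of_nonneg (fun n => sq_nonneg _) hcd,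
        ← ENNReal.ofReal_add (tsum_nonneg fun n => sq_nonneg _)
          (tsum_nonneg fun n => sq_nonneg _)]
    congr 1
    rw [h1re.tsum_eq, hd.tsum_eq]
    ring
  · have hL : ∑' n, ENNReal.ofReal (‖b n‖ ^ 2) = ⊤ := by
      by_contra h
      exact hb2 (by
        have := ENNReal.summable_toReal h
        simpa [ENNReal.toReal_ofReal (sq_nonneg _)] using this)
    have hcd : ¬ Summable (fun n => ‖c n - b n‖ ^ 2) := by
      intro hcd
      apply hb2
      apply Summable.of_nonneg_of_le (fun n => sq_nonneg _)
        (fun n => ?_) ((hcsq.mul_left 2).add (hcd.mul_left 2))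
      have h := sq_norm_add_le' (c n) (b n - c n)
      simp only [add_sub_cancel] at h
      rw [norm_sub_rev (c n) (b n)]
      exact h
    have hR : ∑' n, ENNReal.ofReal (‖c n - b n‖ ^ 2) = ⊤ := by
      by_contra h
      exact hcd (by
        have := ENNReal.summable_toReal h
        simpa [ENNReal.toReal_ofReal (sq_nonneg _)] using this)
    rw [hL, hR]
    simp
end
end

section
/- Let (f_n)_{n∈ℕ} be a sequence in a separable complex Hilbert space H. Then (f_n) is a normalized tight (Parseval) frame for H if and only if there exist a complex Hilbert space K, a linear isometry i : H → K, and an orthonormal basis (e_n)_{n∈ℕ} of K such that P e_n = i(f_n) for all n, where P is the orthogonal projection of K onto the range of i. -/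
noncomputable section

open scoped InnerProductSpace ComplexConjugate ENNReal

/-- A dilation witness for a sequence `f` in `H`: a complex Hilbert space `K`,
a linear isometry `i : H → K`, an orthonormal basis `(eₙ)` of `K`, and the
orthogonal projection `P` of `K` onto the range of `i` (a self-adjoint
idempotent with range equal to the range of `i`) such that `P eₙ = i (fₙ)`
for all `n`. -/
structure ParsevalDilation {H : Type} [NormedAddCommGroup H]
    [InnerProductSpace ℂ H] (f : ℕ → H) where
  K : Type
  [instNormedAddCommGroup : NormedAddCommGroup K]
  [instInnerProductSpace : InnerProductSpace ℂ K]
  [instCompleteSpace : CompleteSpace K]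
  i : H →ₗᵢ[ℂ] K
  e : HilbertBasis ℕ ℂ K
  P : K →L[ℂ] K
  selfAdjoint : IsSelfAdjoint P
  idempotent : ∀ x : K, P (P x) = P x
  range_eq : Set.range P = Set.range i
  proj_basis : ∀ n : ℕ, P (e n) = i (f n)

/-- Parseval identity for a Hilbert basis, in norm-squared form. -/
lemma hilbertBasis_tsum_sq {K : Type} [NormedAddCommGroup K] [InnerProductSpace ℂ K]
    [CompleteSpace K] (e : HilbertBasis ℕ ℂ K) (y : K) :
    ∑' n, ‖(inner ℂ (e n) y : ℂ)‖ ^ 2 = ‖y‖ ^ 2 := by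
  have h1 : ∀ n, (inner ℂ (e n) y : ℂ) = e.repr y n := fun n => (e.repr_apply_apply y n).symm
  have h2 : ‖e.repr y‖ ^ (2 : ℝ) = ∑' n, ‖e.repr y n‖ ^ (2 : ℝ) := by
    simpa using lp.norm_rpow_eq_tsum (p := 2) (by norm_num) (e.repr y)
  have h3 : ‖e.repr y‖ = ‖y‖ := e.repr.norm_map y
  calc ∑' n, ‖(inner ℂ (e n) y : ℂ)‖ ^ 2 = ∑' n, ‖e.repr y n‖ ^ (2 : ℝ) := by
        simp only [h1]
        refine tsum_congr fun n => ?_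
        rw [← Real.rpow_natCast ‖e.repr y n‖ 2]; norm_num
    _ = ‖y‖ ^ 2 := by
        rw [← h2, h3, ← Real.rpow_natCast ‖y‖ 2]; norm_num

/-- A Parseval frame, viewed pointwise, is ℓ². -/
lemma memℓp_of_parseval {H : Type} [NormedAddCommGroup H] [InnerProductSpace ℂ H]
    {f : ℕ → H} (h : ∀ x : H, ∑' n, ‖(inner ℂ x (f n) : ℂ)‖ ^ 2 = ‖x‖ ^ 2) (x : H) :
    Memℓp (fun n => (inner ℂ (f n) x : ℂ)) 2 := by
  have hs : Summable fun n => ‖(inner ℂ x (f n) : ℂ)‖ ^ 2 := by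
    by_contra hns
    have := h x
    rw [tsum_eq_zero_of_not_summable hns] at this
    have hx : x = 0 := by
      have : ‖x‖ = 0 := by nlinarith [norm_nonneg x]
      simpa using this
    refine hns ?_
    simpa [hx] using summable_zero
  apply memℓp_gen
  have heq : (fun n => ‖(inner ℂ (f n) x : ℂ)‖ ^ ((2 : ℝ≥0∞).toReal)) =
      fun n => ‖(inner ℂ x (f n) : ℂ)‖ ^ 2 := by
    funext n
    rw [show ((2 : ℝ≥0∞)).toReal = ((2 : ℕ) : ℝ) by norm_num, Real.rpow_natCast,
      norm_inner_symm]
  rw [heq]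
  exact hs

/-- `(fₙ)` is a normalized tight (Parseval) frame for `H` iff it is the image
of an orthonormal basis of a larger Hilbert space `K ⊇ H` under the orthogonal
projection of `K` onto (the isometric copy of) `H`. -/
theorem parseval_iff_dilation
    {H : Type} [NormedAddCommGroup H] [InnerProductSpace ℂ H] [CompleteSpace H]
    [SecondCountableTopology H] (f : ℕ → H) :
    (∀ x : H, ∑' n, ‖(inner ℂ x (f n) : ℂ)‖ ^ 2 = ‖x‖ ^ 2) ↔
      Nonempty (ParsevalDilation f) := by
  constructor
  · intro h
    -- the analysis operator into ℓ²
    let gLM : H →ₗ[ℂ] lp (fun _ : ℕ => ℂ) 2 :=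
      { toFun := fun x => ⟨fun n => (inner ℂ (f n) x : ℂ), memℓp_of_parseval h x⟩
        map_add' := by intro x y; ext n; simp [inner_add_right]; rfl
        map_smul' := by intro c x; ext n; simp [inner_smul_right] }
    have hg : ∀ x n, (gLM x : ℕ → ℂ) n = (inner ℂ (f n) x : ℂ) := fun _ _ => rfl
    have hnorm : ∀ x, ‖gLM x‖ = ‖x‖ := by
      intro x
      have h2 : ‖gLM x‖ ^ 2 = ∑' n, ‖(gLM x : ℕ → ℂ) n‖ ^ 2 := by
        simpa using lp.norm_rpow_eq_tsum (p := 2) (by norm_num) (gLM x)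
      have h3 : ‖gLM x‖ ^ 2 = ‖x‖ ^ 2 := by
        rw [h2, ← h x]
        refine tsum_congr fun n => ?_
        rw [hg, norm_inner_symm]
      have := congrArg Real.sqrt h3
      simpa [Real.sqrt_sq, norm_nonneg] using this
    let i : H →ₗᵢ[ℂ] lp (fun _ : ℕ => ℂ) 2 := ⟨gLM, hnorm⟩
    let e : HilbertBasis ℕ ℂ (lp (fun _ : ℕ => ℂ) 2) :=
      HilbertBasis.ofRepr (LinearIsometryEquiv.refl ℂ _)
    have he : ∀ n, e n = lp.single 2 n (1 : ℂ) := by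
      intro n
      classical
      rw [← e.repr_symm_single]
      rfl
    set S : Submodule ℂ (lp (fun _ : ℕ => ℂ) 2) := LinearMap.range i.toLinearMap with hS
    have hSrange : (S : Set (lp (fun _ : ℕ => ℂ) 2)) = Set.range i := by
      ext y; simp [hS, LinearMap.mem_range, Set.mem_range]
    have hSclosed : IsClosed (S : Set (lp (fun _ : ℕ => ℂ) 2)) := by
      rw [hSrange]
      exact i.isometry.isClosedEmbedding.isClosed_range
    haveI : CompleteSpace S := hSclosed.completeSpace_coe
    let P : lp (fun _ : ℕ => ℂ) 2 →L[ℂ] lp (fun _ : ℕ => ℂ) 2 :=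
      S.subtypeL ∘L S.orthogonalProjectionOnto
    have hPapply : ∀ y, P y = (S.orthogonalProjectionOnto y : lp (fun _ : ℕ => ℂ) 2) := fun _ => rfl
    have hmem : ∀ z : H, i z ∈ S := fun z => LinearMap.mem_range.2 ⟨z, rfl⟩
    refine ⟨{ K := lp (fun _ : ℕ => ℂ) 2, i := i, e := e, P := P
              selfAdjoint := isSelfAdjoint_starProjection S
              idempotent := ?_, range_eq := ?_, proj_basis := ?_ }⟩
    · intro y
      rw [hPapply, hPapply, Submodule.orthogonalProjectionOnto_mem_subspace_eq_self]
    · ext y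
      constructor
      · rintro ⟨z, rfl⟩
        have : P z ∈ S := by rw [hPapply]; exact (S.orthogonalProjectionOnto z).2
        rwa [← SetLike.mem_coe, hSrange] at this
      · rintro ⟨z, rfl⟩
        exact ⟨i z, by rw [hPapply]; exact Submodule.starProjection_eq_self_iff.2 (hmem z)⟩
    · intro n
      rw [hPapply]
      apply Submodule.eq_starProjection_of_mem_of_inner_eq_zero (K := S) (hmem (f n))
      intro w hw
      obtain ⟨z, rfl⟩ : ∃ z, i z = w := by
        rwa [hS, LinearMap.mem_range] at hw
      rw [he n, inner_sub_left, i.inner_map_map, lp.inner_single_left]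
      have : ((i z : lp (fun _ : ℕ => ℂ) 2) : ℕ → ℂ) n = (inner ℂ (f n) z : ℂ) := rfl
      rw [this]
      simp
  · rintro ⟨d⟩
    intro x
    letI := d.instNormedAddCommGroup
    letI := d.instInnerProductSpace
    letI := d.instCompleteSpace
    obtain ⟨i, e, P, hsa, hid, hrange, hpe⟩ :
        ∃ (i : H →ₗᵢ[ℂ] d.K) (e : HilbertBasis ℕ ℂ d.K) (P : d.K →L[ℂ] d.K),
          IsSelfAdjoint P ∧ (∀ y : d.K, P (P y) = P y) ∧ Set.range P = Set.range i ∧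
            ∀ n : ℕ, P (e n) = i (f n) :=
      ⟨d.i, d.e, d.P, d.selfAdjoint, d.idempotent, d.range_eq, d.proj_basis⟩
    have hfix : ∀ y : d.K, y ∈ Set.range i → P y = y := by
      rintro _ ⟨z, rfl⟩
      obtain ⟨w, hw⟩ : i z ∈ Set.range P := hrange ▸ Set.mem_range_self z
      rw [← hw, hid]
    have hsymm : ∀ a b : d.K, (inner ℂ (P a) b : ℂ) = inner ℂ a (P b) :=
      (ContinuousLinearMap.isSelfAdjoint_iff_isSymmetric.1 hsa)
    have key : ∀ n, (inner ℂ x (f n) : ℂ) = inner ℂ (i x) (e n) := by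
      intro n
      rw [← i.inner_map_map x (f n), ← hpe n, ← hsymm, hfix _ (Set.mem_range_self x)]
    calc ∑' n, ‖(inner ℂ x (f n) : ℂ)‖ ^ 2 = ∑' n, ‖(inner ℂ (e n) (i x) : ℂ)‖ ^ 2 := by
          refine tsum_congr fun n => ?_
          rw [key n, ← norm_inner_symm]
      _ = ‖i x‖ ^ 2 := hilbertBasis_tsum_sq e (i x)
      _ = ‖x‖ ^ 2 := by rw [i.norm_map]
end
end

section
/- Let H be an infinite-dimensional separable complex Hilbert space and let T : H → H be a bounded linear operator. Then there exist a positive real number a and unitary operators U₁, U₂, U₃ on H such that T = a·(U₁ + U₂ + U₃). -/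
noncomputable section

/-- A selfadjoint contraction is half the sum of a unitary and its adjoint. -/
lemma selfAdjoint_half_unitary {H : Type} [NormedAddCommGroup H] [InnerProductSpace ℂ H]
    [CompleteSpace H] [Nontrivial H]
    (A : H →L[ℂ] H) (hA : IsSelfAdjoint A) (hn : ‖A‖ ≤ 1) :
    ∃ U ∈ unitary (H →L[ℂ] H), U + star U = A + A := by
  have hsn : IsStarNormal A := hA.isStarNormal
  set f : ℂ → ℂ := fun z => (z.re : ℂ) + Complex.I * (Real.sqrt (1 - z.re ^ 2) : ℝ) with hf
  have hfc : Continuous f := by fun_prop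
  have hspec : ∀ z ∈ spectrum ℂ A, z = (z.re : ℂ) ∧ z.re ^ 2 ≤ 1 := by
    intro z hz
    have hre := hA.mem_spectrum_eq_re hz
    have hle : ‖z‖ ≤ ‖A‖ := spectrum.norm_le_norm_of_mem hz
    have : |z.re| ≤ 1 := by
      have := Complex.abs_re_le_norm z
      have hzn : ‖z‖ ≤ 1 := le_trans hle hn
      linarith
    exact ⟨hre, by nlinarith [abs_nonneg z.re, sq_abs z.re]⟩
  have key1 : ∀ z ∈ spectrum ℂ A, star (f z) * f z = 1 := by
    intro z hz
    obtain ⟨hre, hsq⟩ := hspec z hz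
    have hs : (Real.sqrt (1 - z.re ^ 2) : ℝ) ^ 2 = 1 - z.re ^ 2 :=
      Real.sq_sqrt (by linarith)
    simp only [hf, Complex.star_def, map_add, map_mul, Complex.conj_I, Complex.conj_ofReal]
    have : ((Real.sqrt (1 - z.re ^ 2) : ℂ)) ^ 2 = ((1 - z.re ^ 2 : ℝ) : ℂ) := by
      rw [← Complex.ofReal_pow, hs]
    have hrw : ((z.re : ℂ))^2 + ((Real.sqrt (1 - z.re ^ 2) : ℂ))^2 = 1 := by
      rw [this]; push_cast; ring
    calc ((z.re : ℂ) + -Complex.I * (Real.sqrt (1 - z.re ^ 2) : ℝ)) *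
          ((z.re : ℂ) + Complex.I * (Real.sqrt (1 - z.re ^ 2) : ℝ))
        = ((z.re : ℂ))^2 - Complex.I^2 * ((Real.sqrt (1 - z.re ^ 2) : ℂ))^2 := by ring
      _ = ((z.re : ℂ))^2 + ((Real.sqrt (1 - z.re ^ 2) : ℂ))^2 := by
          rw [Complex.I_sq]; ring
      _ = 1 := hrw
  have key2 : ∀ z ∈ spectrum ℂ A, f z + star (f z) = z + z := by
    intro z hz
    obtain ⟨hre, _⟩ := hspec z hz
    simp only [hf, Complex.star_def, map_add, map_mul, Complex.conj_I, Complex.conj_ofReal]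
    rw [hre]; simp only [Complex.ofReal_re]; ring
  refine ⟨cfc f A, ?_, ?_⟩
  · rw [Unitary.mem_iff]
    constructor
    · rw [← cfc_star, ← cfc_mul _ _ A hfc.star.continuousOn hfc.continuousOn]
      rw [cfc_congr key1]
      exact cfc_const_one ℂ A
    · rw [← cfc_star, ← cfc_mul _ _ A hfc.continuousOn hfc.star.continuousOn]
      have : ∀ z ∈ spectrum ℂ A, f z * star (f z) = 1 := fun z hz =>
        (mul_comm _ _).trans (key1 z hz)
      rw [cfc_congr this]
      exact cfc_const_one ℂ A
  · rw [← cfc_star, ← cfc_add f (fun z => star (f z)) (a := A) hfc.continuousOn hfc.star.continuousOn]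
    rw [cfc_congr key2]
    have : cfc (fun z : ℂ => z + z) A = A + A := by
      rw [cfc_add (fun z : ℂ => z) (fun z : ℂ => z) (a := A) continuous_id.continuousOn continuous_id.continuousOn, cfc_id' ℂ A]
    exact this

lemma invertible_contraction_sum_two {H : Type} [NormedAddCommGroup H] [InnerProductSpace ℂ H]
    [CompleteSpace H] [Nontrivial H]
    (V : H →L[ℂ] H) (hV : IsUnit V) (hn : ‖V‖ ≤ 1)
    (half : ∀ A : H →L[ℂ] H, IsSelfAdjoint A → ‖A‖ ≤ 1 →
      ∃ U ∈ unitary (H →L[ℂ] H), U + star U = A + A) :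
    ∃ W₁ ∈ unitary (H →L[ℂ] H), ∃ W₂ ∈ unitary (H →L[ℂ] H), W₁ + W₂ = V + V := by
  set M : H →L[ℂ] H := CFC.sqrt (star V * V) with hM
  have hpos : (0 : H →L[ℂ] H) ≤ star V * V := star_mul_self_nonneg V
  have hM2 : M * M = star V * V := CFC.sqrt_mul_sqrt_self _ hpos
  have hMnn : (0 : H →L[ℂ] H) ≤ M := CFC.sqrt_nonneg _
  have hMsa : IsSelfAdjoint M := hMnn.isSelfAdjoint
  have hMnorm : ‖M‖ ≤ 1 := by
    have h1 : ‖M‖ * ‖M‖ = ‖star M * M‖ := (CStarRing.norm_star_mul_self).symm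
    rw [hMsa.star_eq, hM2, CStarRing.norm_star_mul_self] at h1
    nlinarith [norm_nonneg M, norm_nonneg V]
  -- M is invertible
  have hMM : IsUnit (M * M) := hM2 ▸ (hV.star.mul hV)
  obtain ⟨u, hu⟩ := hMM
  have hcomm : Commute M (↑u⁻¹ : H →L[ℂ] H) := by
    have h : Commute M ↑u := by
      rw [hu]; exact (Commute.refl M).mul_right (Commute.refl M)
    exact h.units_inv_right
  have hright : M * (M * ↑u⁻¹) = 1 := by
    rw [← mul_assoc, ← hu, Units.mul_inv]
  have hleft : (M * ↑u⁻¹) * M = 1 := by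
    rw [mul_assoc, ← hcomm.eq, ← mul_assoc, ← hu, Units.mul_inv]
  have hMunit : IsUnit M := ⟨⟨M, M * ↑u⁻¹, hright, hleft⟩, rfl⟩
  obtain ⟨m, hm⟩ := hMunit
  -- star of m⁻¹ is m⁻¹
  have hminv_l : (↑m⁻¹ : H →L[ℂ] H) * M = 1 := by rw [← hm, Units.inv_mul]
  have hminv_r : M * (↑m⁻¹ : H →L[ℂ] H) = 1 := by rw [← hm, Units.mul_inv]
  have hstarinv : star (↑m⁻¹ : H →L[ℂ] H) = ↑m⁻¹ := by
    have h1 : M * star (↑m⁻¹ : H →L[ℂ] H) = 1 := by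
      have := congrArg star hminv_l
      rwa [star_mul, hMsa.star_eq, star_one] at this
    calc star (↑m⁻¹ : H →L[ℂ] H) = (↑m⁻¹ * M) * star (↑m⁻¹ : H →L[ℂ] H) := by
          rw [hminv_l, one_mul]
      _ = ↑m⁻¹ * (M * star (↑m⁻¹ : H →L[ℂ] H)) := by rw [mul_assoc]
      _ = ↑m⁻¹ := by rw [h1, mul_one]
  set U : H →L[ℂ] H := V * ↑m⁻¹ with hU
  have hUst : star U = ↑m⁻¹ * star V := by rw [hU, star_mul, hstarinv]
  have hUu : U ∈ unitary (H →L[ℂ] H) := by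
    rw [Unitary.mem_iff]
    constructor
    · calc star U * U = ↑m⁻¹ * (star V * V) * ↑m⁻¹ := by
            rw [hUst, hU]; noncomm_ring
        _ = ↑m⁻¹ * (M * M) * ↑m⁻¹ := by rw [hM2]
        _ = (↑m⁻¹ * M) * (M * ↑m⁻¹) := by noncomm_ring
        _ = 1 := by rw [hminv_l, hminv_r, one_mul]
    · obtain ⟨v, hv⟩ := hV
      have hx : (↑m⁻¹ : H →L[ℂ] H) * ↑m⁻¹ * star V = ↑v⁻¹ := by
        have h1 : (↑m⁻¹ : H →L[ℂ] H) * ↑m⁻¹ * (star V * V) = 1 := by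
          rw [← hM2]
          calc (↑m⁻¹ : H →L[ℂ] H) * ↑m⁻¹ * (M * M)
              = ↑m⁻¹ * ((↑m⁻¹ * M) * M) := by noncomm_ring
            _ = 1 := by rw [hminv_l, one_mul, hminv_l]
        calc (↑m⁻¹ : H →L[ℂ] H) * ↑m⁻¹ * star V
            = (↑m⁻¹ * ↑m⁻¹ * (star V * V)) * ↑v⁻¹ := by
              rw [← hv]
              calc (↑m⁻¹ : H →L[ℂ] H) * ↑m⁻¹ * star ↑v
                  = ↑m⁻¹ * ↑m⁻¹ * star ↑v * 1 := (mul_one _).symm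
                _ = ↑m⁻¹ * ↑m⁻¹ * star ↑v * (↑v * ↑v⁻¹) := by rw [Units.mul_inv]
                _ = (↑m⁻¹ * ↑m⁻¹ * (star ↑v * ↑v)) * ↑v⁻¹ := by noncomm_ring
          _ = ↑v⁻¹ := by rw [h1, one_mul]
      calc U * star U = V * (↑m⁻¹ * ↑m⁻¹ * star V) := by rw [hU, hUst]; noncomm_ring
        _ = ↑v * ↑v⁻¹ := by rw [hx, ← hv]
        _ = 1 := Units.mul_inv v
  obtain ⟨W, hWu, hW⟩ := half M hMsa hMnorm
  refine ⟨U * W, mul_mem hUu hWu, U * star W,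
    mul_mem hUu (Unitary.star_mem hWu), ?_⟩
  have hUM : U * M = V := by rw [hU, mul_assoc, hminv_l, mul_one]
  calc U * W + U * star W = U * (W + star W) := by rw [mul_add]
    _ = U * (M + M) := by rw [hW]
    _ = V + V := by rw [mul_add, hUM]

/-- Every bounded operator on an infinite-dimensional separable complex
Hilbert space is a positive multiple of a sum of three unitaries. -/
theorem operator_sum_three_unitaries
    {H : Type} [NormedAddCommGroup H] [InnerProductSpace ℂ H] [CompleteSpace H]
    [SecondCountableTopology H] (hH : ¬ FiniteDimensional ℂ H)
    (T : H →L[ℂ] H) :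
    ∃ (a : ℝ) (U₁ U₂ U₃ : H →L[ℂ] H), 0 < a ∧
      U₁ ∈ unitary (H →L[ℂ] H) ∧ U₂ ∈ unitary (H →L[ℂ] H) ∧
      U₃ ∈ unitary (H →L[ℂ] H) ∧ T = a • (U₁ + U₂ + U₃) := by
  have hnt : Nontrivial H := by
    by_contra h
    rw [not_nontrivial_iff_subsingleton] at h
    exact hH (Module.Finite.of_basis (Module.Basis.empty _ (ι := Fin 0)))
  set a : ℝ := ‖T‖ + 1 with ha
  have ha0 : 0 < a := by positivity
  set S : H →L[ℂ] H := a⁻¹ • T with hS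
  have hSnorm : ‖S‖ < 1 := by
    rw [hS, norm_smul, Real.norm_eq_abs, abs_of_pos (inv_pos.mpr ha0)]
    rw [inv_mul_lt_iff₀ ha0, mul_one]
    linarith
  -- S - 1 is a unit
  have h1S : IsUnit (1 - S) := (Units.oneSub S hSnorm).isUnit
  have hS1 : IsUnit (S - 1) := by
    have := h1S.neg
    rwa [neg_sub] at this
  set V : H →L[ℂ] H := (2 : ℝ)⁻¹ • (S - 1) with hV
  have hVunit : IsUnit V := by
    obtain ⟨w, hw⟩ := hS1
    refine ⟨⟨V, (2 : ℝ) • ↑w⁻¹, ?_, ?_⟩, rfl⟩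
    · rw [hV, smul_mul_smul_comm, ← hw, Units.mul_inv]
      norm_num
    · rw [hV, smul_mul_smul_comm, ← hw, Units.inv_mul]
      norm_num
  have hVnorm : ‖V‖ ≤ 1 := by
    rw [hV, norm_smul, Real.norm_eq_abs]
    have h1 : ‖S - 1‖ ≤ ‖S‖ + 1 := by
      calc ‖S - 1‖ ≤ ‖S‖ + ‖(1 : H →L[ℂ] H)‖ := norm_sub_le _ _
        _ = ‖S‖ + 1 := by rw [norm_one]
    rw [abs_of_pos (by norm_num : (0:ℝ) < (2:ℝ)⁻¹)]
    nlinarith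
  obtain ⟨W₁, hW₁, W₂, hW₂, hWsum⟩ := invertible_contraction_sum_two V hVunit hVnorm (fun A hA hn => selfAdjoint_half_unitary A hA hn)
  refine ⟨a, 1, W₁, W₂, ha0, one_mem _, hW₁, hW₂, ?_⟩
  have hVV : V + V = S - 1 := by
    rw [hV, ← add_smul]
    norm_num
  have hsum : (1 : H →L[ℂ] H) + W₁ + W₂ = S := by
    rw [add_assoc, hWsum, hVV]
    abel
  rw [hsum, hS, smul_smul, mul_inv_cancel₀ (ne_of_gt ha0), one_smul]
end
end

section
/- (Hilding's perturbation theorem.) Let (f_i)_{i∈ℕ} and (g_i)_{i∈ℕ} be sequences in a separable complex Hilbert space H such that the closed linear span of (f_i) is H, and suppose there are constants λ₁, λ₂ ∈ [0, 1) such that for all finitely supported scalar sequences (a_i), ‖∑_i a_i (f_i − g_i)‖ ≤ λ₁‖∑_i a_i f_i‖ + λ₂‖∑_i a_i g_i‖. Then the map f_i ↦ g_i extends to a well-defined invertible bounded linear operator T : H → H (a continuous linear equivalence of H onto H) with T f_i = g_i for all i. -/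
noncomputable section

open Finset


lemma hilding_aux' {lam₁ lam₂ t u a b : ℝ} (hlam₁ : 0 ≤ lam₁) (hlam₂ : 0 ≤ lam₂)
    (hlam₂' : lam₂ < 1) (ht0 : 0 ≤ t) (ht1 : t ≤ 1) (hu : 0 ≤ u) (ha : 0 ≤ a) (hb : 0 ≤ b)
    (h1 : u ≤ lam₁ * a + lam₂ * (b + (1 - t) * u))
    (h2 : a ≤ b + t * u) :
    (1 - lam₁) * a ≤ (1 + lam₂) * b := by
  have hD : 0 < 1 - lam₂ * (1 - t) := by nlinarith
  have hDt : t ≤ 1 - lam₂ * (1 - t) := by nlinarith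
  have h1' : u * (1 - lam₂ * (1 - t)) ≤ lam₁ * a + lam₂ * b := by nlinarith
  have hc : 0 ≤ lam₁ * a + lam₂ * b := by positivity
  have key : (a - b - (lam₁ * a + lam₂ * b)) * (1 - lam₂ * (1 - t)) ≤ 0 := by
    nlinarith [mul_le_mul_of_nonneg_left h1' ht0, mul_le_mul_of_nonneg_right hDt hc,
      mul_le_mul_of_nonneg_right h2 hD.le]
  have := le_of_mul_le_mul_right (by linarith : (a - b - (lam₁ * a + lam₂ * b)) * (1 - lam₂ * (1 - t)) ≤ 0 * (1 - lam₂ * (1 - t))) hD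
  linarith

lemma hilding_low {H : Type} [NormedAddCommGroup H] [InnerProductSpace ℂ H]
    (T : H →L[ℂ] H) {lam₁ lam₂ : ℝ} (hlam₁ : 0 ≤ lam₁) (hlam₂ : 0 ≤ lam₂) (hlam₂' : lam₂ < 1)
    (hT : ∀ x : H, ‖x - T x‖ ≤ lam₁ * ‖x‖ + lam₂ * ‖T x‖)
    (t : ℝ) (ht0 : 0 ≤ t) (ht1 : t ≤ 1) (x : H) :
    (1 - lam₁) * ‖x‖ ≤ (1 + lam₂) * ‖((1 : H →L[ℂ] H) + t • (T - 1)) x‖ := by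
  have hTt : ((1 : H →L[ℂ] H) + t • (T - 1)) x = x + t • (T x - x) := by
    simp [ContinuousLinearMap.add_apply, ContinuousLinearMap.smul_apply,
      ContinuousLinearMap.sub_apply, ContinuousLinearMap.one_apply]
  set y : H := ((1 : H →L[ℂ] H) + t • (T - 1)) x with hy
  have hTx := hT x
  have hxeq : x = y - t • (T x - x) := by rw [hTt]; abel
  have h2 : ‖x‖ ≤ ‖y‖ + t * ‖x - T x‖ := by
    calc ‖x‖ = ‖y - t • (T x - x)‖ := by rw [← hxeq]
      _ ≤ ‖y‖ + ‖t • (T x - x)‖ := norm_sub_le _ _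
      _ = ‖y‖ + t * ‖x - T x‖ := by
          rw [norm_smul, Real.norm_eq_abs, abs_of_nonneg ht0, norm_sub_rev]
  have hTx' : ‖T x‖ ≤ ‖y‖ + (1 - t) * ‖x - T x‖ := by
    have heq : T x = y + (1 - t) • (T x - x) := by
      rw [hTt, add_assoc, ← add_smul]
      norm_num
    calc ‖T x‖ = ‖y + (1 - t) • (T x - x)‖ := by rw [← heq]
      _ ≤ ‖y‖ + ‖(1 - t) • (T x - x)‖ := norm_add_le _ _
      _ = ‖y‖ + (1 - t) * ‖x - T x‖ := by
          rw [norm_smul, Real.norm_eq_abs, abs_of_nonneg (by linarith), norm_sub_rev]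
  have h1 : ‖x - T x‖ ≤ lam₁ * ‖x‖ + lam₂ * (‖y‖ + (1 - t) * ‖x - T x‖) := by
    have := mul_le_mul_of_nonneg_left hTx' hlam₂
    linarith
  exact hilding_aux' hlam₁ hlam₂ hlam₂' ht0 ht1 (norm_nonneg _) (norm_nonneg _)
    (norm_nonneg _) h1 h2

lemma hilding_isUnit {H : Type} [NormedAddCommGroup H] [InnerProductSpace ℂ H] [CompleteSpace H]
    (T : H →L[ℂ] H) {lam₁ lam₂ : ℝ} (hlam₁ : 0 ≤ lam₁) (hlam₁' : lam₁ < 1)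
    (hlam₂ : 0 ≤ lam₂) (hlam₂' : lam₂ < 1)
    (hT : ∀ x : H, ‖x - T x‖ ≤ lam₁ * ‖x‖ + lam₂ * ‖T x‖) :
    IsUnit T := by
  rcases subsingleton_or_nontrivial H with hH | hH
  · have : Subsingleton (H →L[ℂ] H) := ⟨fun a b => ContinuousLinearMap.ext fun x => Subsingleton.elim _ _⟩
    exact isUnit_of_subsingleton T
  set A : H →L[ℂ] H := T - 1 with hA
  set m : ℝ := (1 - lam₁) / (1 + lam₂) with hm
  have hm0 : 0 < m := div_pos (by linarith) (by linarith)
  have hlow : ∀ t : ℝ, 0 ≤ t → t ≤ 1 → ∀ x : H,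
      m * ‖x‖ ≤ ‖((1 : H →L[ℂ] H) + t • A) x‖ := by
    intro t ht0 ht1 x
    have := hilding_low T hlam₁ hlam₂ hlam₂' hT t ht0 ht1 x
    rw [hm, div_mul_eq_mul_div, div_le_iff₀ (by linarith)]
    linarith
  have step : ∀ t : ℝ, 0 ≤ t → t ≤ 1 → IsUnit ((1 : H →L[ℂ] H) + t • A) →
      ∀ s : ℝ, 0 ≤ s → s ≤ 1 → |s - t| * ‖A‖ < m → IsUnit ((1 : H →L[ℂ] H) + s • A) := by
    intro t ht0 ht1 hunit s hs0 hs1 hst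
    obtain ⟨u, hu⟩ := hunit
    have hbelow : ∀ y : H, m * ‖((u⁻¹ : (H →L[ℂ] H)ˣ) : H →L[ℂ] H) y‖ ≤ ‖y‖ := by
      intro y
      calc m * ‖((u⁻¹ : (H →L[ℂ] H)ˣ) : H →L[ℂ] H) y‖
          ≤ ‖((1 : H →L[ℂ] H) + t • A) (((u⁻¹ : (H →L[ℂ] H)ˣ) : H →L[ℂ] H) y)‖ :=
            hlow t ht0 ht1 _
        _ = ‖((u : H →L[ℂ] H) * ((u⁻¹ : (H →L[ℂ] H)ˣ) : H →L[ℂ] H)) y‖ := by rw [hu]; rfl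
        _ = ‖y‖ := by rw [u.mul_inv]; rfl
    have hinvnorm : ‖((u⁻¹ : (H →L[ℂ] H)ˣ) : H →L[ℂ] H)‖ ≤ m⁻¹ := by
      apply ContinuousLinearMap.opNorm_le_bound _ (by positivity)
      intro y
      rw [inv_mul_eq_div, le_div_iff₀ hm0]
      linarith [hbelow y]
    have hinvpos : 0 < ‖((u⁻¹ : (H →L[ℂ] H)ˣ) : H →L[ℂ] H)‖ := Units.norm_pos u⁻¹
    have hlt : ‖(s - t) • A‖ < ‖((u⁻¹ : (H →L[ℂ] H)ˣ) : H →L[ℂ] H)‖⁻¹ := by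
      have h1 : ‖(s - t) • A‖ = |s - t| * ‖A‖ := by rw [norm_smul, Real.norm_eq_abs]
      have h2 : m ≤ ‖((u⁻¹ : (H →L[ℂ] H)ˣ) : H →L[ℂ] H)‖⁻¹ := by
        rw [le_inv_comm₀ hm0 hinvpos]
        exact hinvnorm
      rw [h1]
      linarith
    refine ⟨Units.add u ((s - t) • A) hlt, ?_⟩
    have hval : (Units.add u ((s - t) • A) hlt : H →L[ℂ] H) = (u : H →L[ℂ] H) + (s - t) • A := rfl
    rw [hval, hu, add_assoc, ← add_smul]
    norm_num
  set r : ℝ := m / (2 * (‖A‖ + 1)) with hr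
  have hr0 : 0 < r := div_pos hm0 (by positivity)
  have hrA : r * ‖A‖ < m := by
    rw [hr, div_mul_eq_mul_div, div_lt_iff₀ (by positivity)]
    nlinarith [norm_nonneg A, hm0]
  have main : ∀ n : ℕ, ∀ t : ℝ, 0 ≤ t → t ≤ 1 → t ≤ n * r → IsUnit ((1 : H →L[ℂ] H) + t • A) := by
    intro n
    induction n with
    | zero =>
      intro t ht0 ht1 htn
      have ht : t = 0 := le_antisymm (by simpa using htn) ht0
      rw [ht]
      simp
    | succ n ih =>
      intro t ht0 ht1 htn
      by_cases h : t ≤ n * r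
      · exact ih t ht0 ht1 h
      · push_neg at h
        have hnr0 : 0 ≤ (n : ℝ) * r := by positivity
        have hnr1 : (n : ℝ) * r ≤ 1 := le_trans h.le ht1
        refine step ((n : ℝ) * r) hnr0 hnr1 (ih ((n : ℝ) * r) hnr0 hnr1 le_rfl) t ht0 ht1 ?_
        have habs : |t - (n : ℝ) * r| ≤ r := by
          rw [abs_of_nonneg (by linarith)]
          have : ((n : ℕ) + 1 : ℝ) * r = n * r + r := by ring
          push_cast at htn
          linarith
        calc |t - (n : ℝ) * r| * ‖A‖ ≤ r * ‖A‖ :=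
              mul_le_mul_of_nonneg_right habs (norm_nonneg _)
          _ < m := hrA
  obtain ⟨n, hn⟩ := exists_nat_ge (1 / r)
  have h1n : (1 : ℝ) ≤ n * r := by
    rw [div_le_iff₀ hr0] at hn
    linarith
  have hunit := main n 1 zero_le_one le_rfl h1n
  rw [one_smul] at hunit
  have hTA : (1 : H →L[ℂ] H) + A = T := by rw [hA]; abel
  rwa [hTA] at hunit

/-- Hilding's perturbation theorem: if `(fᵢ)` is complete in `H` and
`‖∑ aᵢ(fᵢ - gᵢ)‖ ≤ λ₁‖∑ aᵢ fᵢ‖ + λ₂‖∑ aᵢ gᵢ‖` for all finitely supported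
scalars with `0 ≤ λ₁, λ₂ < 1`, then `fᵢ ↦ gᵢ` extends to an invertible bounded
operator of `H` onto `H`. -/
theorem hilding_perturbation
    {H : Type} [NormedAddCommGroup H] [InnerProductSpace ℂ H] [CompleteSpace H]
    [SecondCountableTopology H] (f g : ℕ → H)
    (hcomplete : (Submodule.span ℂ (Set.range f)).topologicalClosure = ⊤)
    (lam₁ lam₂ : ℝ) (hlam₁ : 0 ≤ lam₁) (hlam₁' : lam₁ < 1)
    (hlam₂ : 0 ≤ lam₂) (hlam₂' : lam₂ < 1)
    (hper : ∀ a : ℕ →₀ ℂ,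
      ‖∑ i ∈ a.support, a i • (f i - g i)‖ ≤
        lam₁ * ‖∑ i ∈ a.support, a i • f i‖ +
        lam₂ * ‖∑ i ∈ a.support, a i • g i‖) :
    ∃ T : H ≃L[ℂ] H, ∀ i : ℕ, T (f i) = g i := by
  classical
  set p : Submodule ℂ H := Submodule.span ℂ (Set.range f) with hp
  set φ : (ℕ →₀ ℂ) →ₗ[ℂ] H := Finsupp.linearCombination ℂ f with hφdef
  set ψ : (ℕ →₀ ℂ) →ₗ[ℂ] H := Finsupp.linearCombination ℂ g with hψdef
  have hφ : ∀ a : ℕ →₀ ℂ, φ a = ∑ i ∈ a.support, a i • f i := fun a => by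
    simp [hφdef, Finsupp.linearCombination_apply, Finsupp.sum]
  have hψ : ∀ a : ℕ →₀ ℂ, ψ a = ∑ i ∈ a.support, a i • g i := fun a => by
    simp [hψdef, Finsupp.linearCombination_apply, Finsupp.sum]
  have hkey0 : ∀ a : ℕ →₀ ℂ, ‖φ a - ψ a‖ ≤ lam₁ * ‖φ a‖ + lam₂ * ‖ψ a‖ := by
    intro a
    have hsub : φ a - ψ a = ∑ i ∈ a.support, a i • (f i - g i) := by
      rw [hφ, hψ, ← Finset.sum_sub_distrib]
      exact Finset.sum_congr rfl fun i _ => (smul_sub _ _ _).symm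
    rw [hsub, hφ, hψ]
    exact hper a
  have hker : LinearMap.ker φ ≤ LinearMap.ker ψ := by
    intro a ha
    rw [LinearMap.mem_ker] at ha ⊢
    have h := hkey0 a
    rw [ha] at h
    simp only [zero_sub, norm_neg, norm_zero, mul_zero, zero_add] at h
    have : ‖ψ a‖ ≤ 0 := by nlinarith [norm_nonneg (ψ a)]
    simpa using le_antisymm this (norm_nonneg _)
  have hrange : LinearMap.range φ = p := Finsupp.range_linearCombination ℂ (v := f)
  set eqv : ((ℕ →₀ ℂ) ⧸ LinearMap.ker φ) ≃ₗ[ℂ] p :=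
    φ.quotKerEquivRange.trans (LinearEquiv.ofEq _ _ hrange) with heqv
  set S : p →ₗ[ℂ] H := ((LinearMap.ker φ).liftQ ψ hker) ∘ₗ eqv.symm.toLinearMap with hSdef
  have hmemrange : ∀ a : ℕ →₀ ℂ, φ a ∈ p := fun a => hrange ▸ LinearMap.mem_range_self φ a
  have hS : ∀ (a : ℕ →₀ ℂ) (h : φ a ∈ p), S ⟨φ a, h⟩ = ψ a := by
    intro a h
    have e1 : eqv.symm ⟨φ a, h⟩ = Submodule.Quotient.mk a := by
      apply eqv.injective
      rw [LinearEquiv.apply_symm_apply]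
      apply Subtype.ext
      simp [heqv, LinearEquiv.trans_apply, LinearMap.quotKerEquivRange_apply_mk]
    simp [hSdef, e1, Submodule.liftQ_apply]
  have hrep : ∀ x : p, ∃ a : ℕ →₀ ℂ, φ a = (x : H) := by
    intro x
    have : (x : H) ∈ LinearMap.range φ := hrange.symm ▸ x.2
    exact this
  have hSbound : ∀ x : p, ‖S x‖ ≤ ((1 + lam₁) / (1 - lam₂)) * ‖x‖ := by
    intro x
    obtain ⟨a, ha⟩ := hrep x
    have hx : x = ⟨φ a, ha ▸ x.2⟩ := Subtype.ext ha.symm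
    rw [hx, hS a _]
    have hnx : ‖(⟨φ a, ha ▸ x.2⟩ : p)‖ = ‖φ a‖ := rfl
    rw [hnx]
    have h1 := hkey0 a
    have h2 : ‖ψ a‖ ≤ ‖φ a‖ + ‖φ a - ψ a‖ := by
      have := norm_sub_le (φ a) (φ a - ψ a)
      rwa [sub_sub_cancel] at this
    rw [div_mul_eq_mul_div, le_div_iff₀ (by linarith)]
    nlinarith [norm_nonneg (ψ a), norm_nonneg (φ a)]
  set Sc : p →L[ℂ] H := S.mkContinuous ((1 + lam₁) / (1 - lam₂)) hSbound with hScdef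
  have hScS : ∀ x : p, Sc x = S x := fun x => rfl
  set e : p →L[ℂ] H := p.subtypeL with hedef
  have hd : DenseRange e := by
    have hdense : Dense (p : Set H) := Submodule.dense_iff_topologicalClosure_eq_top.mpr hcomplete
    have : Set.range e = (p : Set H) := Subtype.range_coe
    rw [DenseRange, this]
    exact hdense
  have hind : IsUniformInducing e := isometry_subtype_coe.isUniformInducing
  set T : H →L[ℂ] H := Sc.extend e with hTdef
  have hTe : ∀ x : p, T (x : H) = Sc x := fun x => ContinuousLinearMap.extend_eq Sc hd hind x
  have hTf : ∀ i : ℕ, T (f i) = g i := by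
    intro i
    have hmem : f i ∈ p := Submodule.subset_span ⟨i, rfl⟩
    have hfi : φ (Finsupp.single i 1) = f i := by
      simp [hφdef, Finsupp.linearCombination_single]
    have : T (f i) = Sc ⟨f i, hmem⟩ := hTe ⟨f i, hmem⟩
    rw [this, hScS]
    have hx : (⟨f i, hmem⟩ : p) = ⟨φ (Finsupp.single i 1), hfi ▸ hmem⟩ := Subtype.ext hfi.symm
    rw [hx, hS]
    simp [hψdef, Finsupp.linearCombination_single]
  -- the perturbation inequality extends to all of H by density
  have hT : ∀ x : H, ‖x - T x‖ ≤ lam₁ * ‖x‖ + lam₂ * ‖T x‖ := by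
    intro x
    refine hd.induction_on x ?_ ?_
    · apply isClosed_le
      · exact ((continuous_id.sub T.continuous).norm)
      · exact ((continuous_const.mul continuous_norm).add (continuous_const.mul T.continuous.norm))
    · intro y
      obtain ⟨a, ha⟩ := hrep y
      have hy : y = ⟨φ a, ha ▸ y.2⟩ := Subtype.ext ha.symm
      have hey : e y = φ a := by rw [hy]; rfl
      have hTey : T (e y) = ψ a := by
        rw [show e y = ((y : p) : H) from rfl, hTe y, hScS, hy, hS]
      show ‖e y - T (e y)‖ ≤ lam₁ * ‖e y‖ + lam₂ * ‖T (e y)‖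
      rw [hTey, hey]
      exact hkey0 a
  have hunit := hilding_isUnit T hlam₁ hlam₁' hlam₂ hlam₂' hT
  obtain ⟨u, hu⟩ := hunit
  refine ⟨ContinuousLinearEquiv.unitsEquiv ℂ H u, fun i => ?_⟩
  rw [ContinuousLinearEquiv.unitsEquiv_apply, hu]
  exact hTf i
end
end

section
/- Let (f_i)_{i∈ℕ} be a frame for a separable complex Hilbert space H and let (g_i)_{i∈ℕ} be a sequence in H. The following are equivalent: (1) (g_i) is a frame for H; (2) there exists a constant M > 0 such that for all f ∈ H, ∑_i |⟨f, f_i − g_i⟩|² ≤ M · min( ∑_i |⟨f, f_i⟩|², ∑_i |⟨f, g_i⟩|² ). -/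
noncomputable section


private lemma norm_sq_le_two (a b : ℂ) : ‖a‖ ^ 2 ≤ 2 * ‖b‖ ^ 2 + 2 * ‖a - b‖ ^ 2 := by
  have h : ‖a‖ ≤ ‖b‖ + ‖a - b‖ := by
    have := norm_add_le b (a - b)
    simpa using this
  have h2 : ‖a‖ ^ 2 ≤ (‖b‖ + ‖a - b‖) ^ 2 := pow_le_pow_left₀ (norm_nonneg a) h 2
  nlinarith [sq_nonneg (‖b‖ - ‖a - b‖)]

private lemma frame_summable {H : Type} [NormedAddCommGroup H] [InnerProductSpace ℂ H]
    {f : ℕ → H} (hf : ∃ A B : ℝ, 0 < A ∧ 0 < B ∧ ∀ x : H,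
    A * ‖x‖ ^ 2 ≤ ∑' n, ‖(inner ℂ x (f n) : ℂ)‖ ^ 2 ∧
    ∑' n, ‖(inner ℂ x (f n) : ℂ)‖ ^ 2 ≤ B * ‖x‖ ^ 2) (x : H) :
    Summable (fun n => ‖(inner ℂ x (f n) : ℂ)‖ ^ 2) := by
  obtain ⟨A, B, hA, hB, h⟩ := hf
  by_contra hs
  have h0 := tsum_eq_zero_of_not_summable hs
  have h1 := (h x).1
  rw [h0] at h1
  have hx : x = 0 := by
    by_contra hne
    have hxp : 0 < ‖x‖ := norm_pos_iff.mpr hne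
    have : 0 < A * ‖x‖ ^ 2 := by positivity
    linarith
  subst hx
  apply hs
  convert summable_zero with n
  simp

private lemma summable_of_enn {a : ℕ → ℝ} (ha : ∀ i, 0 ≤ a i)
    (h : ∑' i, ENNReal.ofReal (a i) ≠ ⊤) : Summable a := by
  have h2 := ENNReal.summable_toReal h
  have h3 : (fun i => (ENNReal.ofReal (a i)).toReal) = a :=
    funext fun i => ENNReal.toReal_ofReal (ha i)
  rwa [h3] at h2

private lemma enn_tsum_eq {a : ℕ → ℝ} (ha : ∀ i, 0 ≤ a i) (hs : Summable a) :
    ∑' i, ENNReal.ofReal (a i) = ENNReal.ofReal (∑' i, a i) :=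
  (ENNReal.ofReal_tsum_of_nonneg ha hs).symm


/-- A sequence `f` in a complex Hilbert space is a frame. -/
def IsFrame {H : Type} [NormedAddCommGroup H] [InnerProductSpace ℂ H]
    (f : ℕ → H) : Prop :=
  ∃ A B : ℝ, 0 < A ∧ 0 < B ∧ ∀ x : H,
    A * ‖x‖ ^ 2 ≤ ∑' n, ‖(inner ℂ x (f n) : ℂ)‖ ^ 2 ∧
    ∑' n, ‖(inner ℂ x (f n) : ℂ)‖ ^ 2 ≤ B * ‖x‖ ^ 2

/-- Casazza's necessary and sufficient perturbation condition: if `(fᵢ)` is a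
frame for `H` and `(gᵢ)` a sequence in `H`, then `(gᵢ)` is a frame iff there is
`M > 0` with `∑ᵢ |⟨x, fᵢ - gᵢ⟩|² ≤ M · min(∑ᵢ |⟨x, fᵢ⟩|², ∑ᵢ |⟨x, gᵢ⟩|²)`
for every `x` (an inequality of sums in `[0,∞]`). -/
theorem perturbation_frame_iff
    {H : Type} [NormedAddCommGroup H] [InnerProductSpace ℂ H] [CompleteSpace H]
    [SecondCountableTopology H] (f g : ℕ → H) (hf : IsFrame f) :
    IsFrame g ↔
      ∃ M : ℝ, 0 < M ∧ ∀ x : H,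
        ∑' i, ENNReal.ofReal (‖(inner ℂ x (f i - g i) : ℂ)‖ ^ 2) ≤
          ENNReal.ofReal M *
            min (∑' i, ENNReal.ofReal (‖(inner ℂ x (f i) : ℂ)‖ ^ 2))
                (∑' i, ENNReal.ofReal (‖(inner ℂ x (g i) : ℂ)‖ ^ 2)) := by
  obtain ⟨A, B, hA, hB, hfAB⟩ := hf
  have hfsum : ∀ x : H, Summable (fun n => ‖(inner ℂ x (f n) : ℂ)‖ ^ 2) :=
    frame_summable ⟨A, B, hA, hB, hfAB⟩
  have hFnn : ∀ (x : H) (i : ℕ), (0:ℝ) ≤ ‖(inner ℂ x (f i) : ℂ)‖ ^ 2 := fun x i => by positivity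
  have hGnn : ∀ (x : H) (i : ℕ), (0:ℝ) ≤ ‖(inner ℂ x (g i) : ℂ)‖ ^ 2 := fun x i => by positivity
  have hDnn : ∀ (x : H) (i : ℕ), (0:ℝ) ≤ ‖(inner ℂ x (f i - g i) : ℂ)‖ ^ 2 := fun x i => by positivity
  -- pointwise inequalities
  have hsub : ∀ (x : H) (i : ℕ),
      (inner ℂ x (f i - g i) : ℂ) = (inner ℂ x (f i) : ℂ) - inner ℂ x (g i) := fun x i =>
    inner_sub_right x (f i) (g i)
  have keyD : ∀ (x : H) (i : ℕ), ‖(inner ℂ x (f i - g i) : ℂ)‖ ^ 2 ≤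
      2 * ‖(inner ℂ x (f i) : ℂ)‖ ^ 2 + 2 * ‖(inner ℂ x (g i) : ℂ)‖ ^ 2 := by
    intro x i
    rw [hsub]
    have := norm_sq_le_two ((inner ℂ x (f i) : ℂ) - inner ℂ x (g i)) (inner ℂ x (f i) : ℂ)
    simpa using this
  have keyF : ∀ (x : H) (i : ℕ), ‖(inner ℂ x (f i) : ℂ)‖ ^ 2 ≤
      2 * ‖(inner ℂ x (g i) : ℂ)‖ ^ 2 + 2 * ‖(inner ℂ x (f i - g i) : ℂ)‖ ^ 2 := by
    intro x i
    have := norm_sq_le_two (inner ℂ x (f i) : ℂ) (inner ℂ x (g i) : ℂ)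
    rw [hsub]
    exact this
  have keyG : ∀ (x : H) (i : ℕ), ‖(inner ℂ x (g i) : ℂ)‖ ^ 2 ≤
      2 * ‖(inner ℂ x (f i) : ℂ)‖ ^ 2 + 2 * ‖(inner ℂ x (f i - g i) : ℂ)‖ ^ 2 := by
    intro x i
    have := norm_sq_le_two (inner ℂ x (g i) : ℂ) (inner ℂ x (f i) : ℂ)
    rw [hsub]
    have h2 : ‖(inner ℂ x (g i) : ℂ) - inner ℂ x (f i)‖ =
        ‖(inner ℂ x (f i) : ℂ) - inner ℂ x (g i)‖ := norm_sub_rev _ _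
    rw [h2] at this
    exact this
  constructor
  · rintro ⟨A', B', hA', hB', hgAB⟩
    have hgsum : ∀ x : H, Summable (fun n => ‖(inner ℂ x (g n) : ℂ)‖ ^ 2) :=
      frame_summable ⟨A', B', hA', hB', hgAB⟩
    have hmin : 0 < min A A' := lt_min hA hA'
    refine ⟨2 * (B + B') / min A A', by positivity, fun x => ?_⟩
    have hDle : ∀ i, ‖(inner ℂ x (f i - g i) : ℂ)‖ ^ 2 ≤
        2 * ‖(inner ℂ x (f i) : ℂ)‖ ^ 2 + 2 * ‖(inner ℂ x (g i) : ℂ)‖ ^ 2 := keyD x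
    have hsum2 : Summable (fun i => 2 * ‖(inner ℂ x (f i) : ℂ)‖ ^ 2 +
        2 * ‖(inner ℂ x (g i) : ℂ)‖ ^ 2) :=
      ((hfsum x).mul_left 2).add ((hgsum x).mul_left 2)
    calc ∑' i, ENNReal.ofReal (‖(inner ℂ x (f i - g i) : ℂ)‖ ^ 2)
        ≤ ∑' i, ENNReal.ofReal (2 * ‖(inner ℂ x (f i) : ℂ)‖ ^ 2 +
            2 * ‖(inner ℂ x (g i) : ℂ)‖ ^ 2) :=
          ENNReal.tsum_le_tsum fun i => ENNReal.ofReal_le_ofReal (hDle i)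
      _ = ENNReal.ofReal (∑' i, (2 * ‖(inner ℂ x (f i) : ℂ)‖ ^ 2 +
            2 * ‖(inner ℂ x (g i) : ℂ)‖ ^ 2)) :=
          enn_tsum_eq (fun i => by positivity) hsum2
      _ = ENNReal.ofReal (2 * (∑' i, ‖(inner ℂ x (f i) : ℂ)‖ ^ 2) +
            2 * (∑' i, ‖(inner ℂ x (g i) : ℂ)‖ ^ 2)) := by
          rw [Summable.tsum_add ((hfsum x).mul_left 2) ((hgsum x).mul_left 2),
            tsum_mul_left, tsum_mul_left]
      _ ≤ ENNReal.ofReal (2 * (B * ‖x‖ ^ 2) + 2 * (B' * ‖x‖ ^ 2)) := by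
          apply ENNReal.ofReal_le_ofReal
          have h1 := (hfAB x).2
          have h2 := (hgAB x).2
          linarith
      _ = ENNReal.ofReal (2 * (B + B') / min A A') * ENNReal.ofReal (min A A' * ‖x‖ ^ 2) := by
          rw [← ENNReal.ofReal_mul (by positivity)]
          congr 1
          field_simp
      _ ≤ ENNReal.ofReal (2 * (B + B') / min A A') *
            min (∑' i, ENNReal.ofReal (‖(inner ℂ x (f i) : ℂ)‖ ^ 2))
                (∑' i, ENNReal.ofReal (‖(inner ℂ x (g i) : ℂ)‖ ^ 2)) := by
          apply mul_le_mul_right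
          apply le_min
          · rw [enn_tsum_eq (hFnn x) (hfsum x)]
            apply ENNReal.ofReal_le_ofReal
            have := (hfAB x).1
            have hm : min A A' * ‖x‖ ^ 2 ≤ A * ‖x‖ ^ 2 := by
              apply mul_le_mul_of_nonneg_right (min_le_left _ _) (by positivity)
            linarith
          · rw [enn_tsum_eq (hGnn x) (hgsum x)]
            apply ENNReal.ofReal_le_ofReal
            have := (hgAB x).1
            have hm : min A A' * ‖x‖ ^ 2 ≤ A' * ‖x‖ ^ 2 := by
              apply mul_le_mul_of_nonneg_right (min_le_right _ _) (by positivity)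
            linarith
  · rintro ⟨M, hM, hcond⟩
    refine ⟨A / (2 + 2 * M), (2 + 2 * M) * B, by positivity, by positivity, fun x => ?_⟩
    have hFsum := hfsum x
    have hFenn : ∑' i, ENNReal.ofReal (‖(inner ℂ x (f i) : ℂ)‖ ^ 2) =
        ENNReal.ofReal (∑' i, ‖(inner ℂ x (f i) : ℂ)‖ ^ 2) := enn_tsum_eq (hFnn x) hFsum
    have hFtop : ∑' i, ENNReal.ofReal (‖(inner ℂ x (f i) : ℂ)‖ ^ 2) ≠ ⊤ := by
      rw [hFenn]; exact ENNReal.ofReal_ne_top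
    have hcx := hcond x
    have hDtop : ∑' i, ENNReal.ofReal (‖(inner ℂ x (f i - g i) : ℂ)‖ ^ 2) ≠ ⊤ := by
      apply ne_top_of_le_ne_top _ hcx
      apply ENNReal.mul_ne_top ENNReal.ofReal_ne_top
      exact ne_top_of_le_ne_top hFtop (min_le_left _ _)
    have hDsum : Summable (fun i => ‖(inner ℂ x (f i - g i) : ℂ)‖ ^ 2) :=
      summable_of_enn (hDnn x) hDtop
    have hDenn : ∑' i, ENNReal.ofReal (‖(inner ℂ x (f i - g i) : ℂ)‖ ^ 2) =
        ENNReal.ofReal (∑' i, ‖(inner ℂ x (f i - g i) : ℂ)‖ ^ 2) := enn_tsum_eq (hDnn x) hDsum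
    have hGtop : ∑' i, ENNReal.ofReal (‖(inner ℂ x (g i) : ℂ)‖ ^ 2) ≠ ⊤ := by
      refine ne_top_of_le_ne_top ?_
        (ENNReal.tsum_le_tsum fun i => ENNReal.ofReal_le_ofReal (keyG x i))
      rw [enn_tsum_eq (fun i => by positivity) ((hFsum.mul_left 2).add (hDsum.mul_left 2))]
      exact ENNReal.ofReal_ne_top
    have hGsum : Summable (fun i => ‖(inner ℂ x (g i) : ℂ)‖ ^ 2) :=
      summable_of_enn (hGnn x) hGtop
    have hGenn : ∑' i, ENNReal.ofReal (‖(inner ℂ x (g i) : ℂ)‖ ^ 2) =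
        ENNReal.ofReal (∑' i, ‖(inner ℂ x (g i) : ℂ)‖ ^ 2) := enn_tsum_eq (hGnn x) hGsum
    have hGnn' : (0:ℝ) ≤ ∑' i, ‖(inner ℂ x (g i) : ℂ)‖ ^ 2 := tsum_nonneg (hGnn x)
    have hFnn' : (0:ℝ) ≤ ∑' i, ‖(inner ℂ x (f i) : ℂ)‖ ^ 2 := tsum_nonneg (hFnn x)
    -- real inequalities from the ENNReal hypothesis
    have hDG : ∑' i, ‖(inner ℂ x (f i - g i) : ℂ)‖ ^ 2 ≤
        M * ∑' i, ‖(inner ℂ x (g i) : ℂ)‖ ^ 2 := by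
      have h1 : ENNReal.ofReal (∑' i, ‖(inner ℂ x (f i - g i) : ℂ)‖ ^ 2) ≤
          ENNReal.ofReal (M * ∑' i, ‖(inner ℂ x (g i) : ℂ)‖ ^ 2) := by
        rw [← hDenn, ENNReal.ofReal_mul hM.le, ← hGenn]
        exact hcx.trans (mul_le_mul_right (min_le_right _ _) _)
      exact (ENNReal.ofReal_le_ofReal_iff (by positivity)).mp h1
    have hDF : ∑' i, ‖(inner ℂ x (f i - g i) : ℂ)‖ ^ 2 ≤
        M * ∑' i, ‖(inner ℂ x (f i) : ℂ)‖ ^ 2 := by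
      have h1 : ENNReal.ofReal (∑' i, ‖(inner ℂ x (f i - g i) : ℂ)‖ ^ 2) ≤
          ENNReal.ofReal (M * ∑' i, ‖(inner ℂ x (f i) : ℂ)‖ ^ 2) := by
        rw [← hDenn, ENNReal.ofReal_mul hM.le, ← hFenn]
        exact hcx.trans (mul_le_mul_right (min_le_left _ _) _)
      exact (ENNReal.ofReal_le_ofReal_iff (by positivity)).mp h1
    have hFle : ∑' i, ‖(inner ℂ x (f i) : ℂ)‖ ^ 2 ≤
        2 * (∑' i, ‖(inner ℂ x (g i) : ℂ)‖ ^ 2) + 2 * (∑' i, ‖(inner ℂ x (f i - g i) : ℂ)‖ ^ 2) := by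
      have := Summable.tsum_le_tsum (keyF x) hFsum ((hGsum.mul_left 2).add (hDsum.mul_left 2))
      rwa [Summable.tsum_add (hGsum.mul_left 2) (hDsum.mul_left 2), tsum_mul_left, tsum_mul_left] at this
    have hGle : ∑' i, ‖(inner ℂ x (g i) : ℂ)‖ ^ 2 ≤
        2 * (∑' i, ‖(inner ℂ x (f i) : ℂ)‖ ^ 2) + 2 * (∑' i, ‖(inner ℂ x (f i - g i) : ℂ)‖ ^ 2) := by
      have := Summable.tsum_le_tsum (keyG x) hGsum ((hFsum.mul_left 2).add (hDsum.mul_left 2))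
      rwa [Summable.tsum_add (hFsum.mul_left 2) (hDsum.mul_left 2), tsum_mul_left, tsum_mul_left] at this
    constructor
    · have h1 := (hfAB x).1
      rw [div_mul_eq_mul_div, div_le_iff₀ (by positivity)]
      calc A * ‖x‖ ^ 2 ≤ ∑' i, ‖(inner ℂ x (f i) : ℂ)‖ ^ 2 := h1
        _ ≤ (2 + 2 * M) * ∑' i, ‖(inner ℂ x (g i) : ℂ)‖ ^ 2 := by nlinarith
        _ = (∑' i, ‖(inner ℂ x (g i) : ℂ)‖ ^ 2) * (2 + 2 * M) := by ring
    · have h2 := (hfAB x).2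
      calc ∑' i, ‖(inner ℂ x (g i) : ℂ)‖ ^ 2
          ≤ (2 + 2 * M) * ∑' i, ‖(inner ℂ x (f i) : ℂ)‖ ^ 2 := by nlinarith
        _ ≤ (2 + 2 * M) * (B * ‖x‖ ^ 2) := by
            apply mul_le_mul_of_nonneg_left h2 (by positivity)
        _ = (2 + 2 * M) * B * ‖x‖ ^ 2 := by ring
end
end

section
/- Let (f_i)_{i∈ℕ} be a frame for a separable complex Hilbert space H with frame bounds A, B > 0, let (g_i)_{i∈ℕ} be a sequence in H, and let λ₁, μ ≥ 0 satisfy λ₁ + μ/√A < 1. If for every f ∈ H one has ( ∑_i |⟨f, f_i − g_i⟩|² )^{1/2} ≤ λ₁ ( ∑_i |⟨f, f_i⟩|² )^{1/2} + μ‖f‖, then (g_i) is also a frame for H. -/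
noncomputable section

private lemma sq_norm_summable_of_tsum_ofReal_ne_top {w : ℕ → ℂ}
    (h : (∑' i, ENNReal.ofReal (‖w i‖ ^ 2)) ≠ ⊤) :
    Summable (fun i => ‖w i‖ ^ 2) := by
  have h2 := ENNReal.summable_toReal h
  have h3 : ∀ i, (ENNReal.ofReal (‖w i‖ ^ 2)).toReal = ‖w i‖ ^ 2 :=
    fun i => ENNReal.toReal_ofReal (by positivity)
  simpa [h3] using h2

/-- Casazza–Christensen perturbation theorem: if `(fᵢ)` is a frame with bounds
`A, B`, and `λ₁ + μ/√A < 1` with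
`(∑ᵢ |⟨x, fᵢ - gᵢ⟩|²)^{1/2} ≤ λ₁ (∑ᵢ |⟨x, fᵢ⟩|²)^{1/2} + μ‖x‖` for all `x`
(the left-hand sum taken in `[0,∞]`), then `(gᵢ)` is also a frame for `H`. -/
theorem perturbation_frame
    {H : Type} [NormedAddCommGroup H] [InnerProductSpace ℂ H] [CompleteSpace H]
    [SecondCountableTopology H] (f g : ℕ → H) (A B : ℝ) (hA : 0 < A) (hB : 0 < B)
    (hframe : ∀ x : H,
      A * ‖x‖ ^ 2 ≤ ∑' i, ‖(inner ℂ x (f i) : ℂ)‖ ^ 2 ∧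
      ∑' i, ‖(inner ℂ x (f i) : ℂ)‖ ^ 2 ≤ B * ‖x‖ ^ 2)
    (lam mu : ℝ) (hlam : 0 ≤ lam) (hmu : 0 ≤ mu)
    (hsmall : lam + mu / Real.sqrt A < 1)
    (hper : ∀ x : H,
      (∑' i, ENNReal.ofReal (‖(inner ℂ x (f i - g i) : ℂ)‖ ^ 2)) ^ ((1 : ℝ) / 2) ≤
        ENNReal.ofReal
          (lam * Real.sqrt (∑' i, ‖(inner ℂ x (f i) : ℂ)‖ ^ 2) + mu * ‖x‖)) :
    ∃ A' B' : ℝ, 0 < A' ∧ 0 < B' ∧ ∀ x : H,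
      A' * ‖x‖ ^ 2 ≤ ∑' i, ‖(inner ℂ x (g i) : ℂ)‖ ^ 2 ∧
      ∑' i, ‖(inner ℂ x (g i) : ℂ)‖ ^ 2 ≤ B' * ‖x‖ ^ 2 := by
  have hsA : 0 < Real.sqrt A := Real.sqrt_pos.2 hA
  have hC : 0 < (1 - lam) * Real.sqrt A - mu := by
    have : mu / Real.sqrt A < 1 - lam := by linarith
    have := (div_lt_iff₀ hsA).1 this
    nlinarith
  refine ⟨((1 - lam) * Real.sqrt A - mu) ^ 2, ((1 + lam) * Real.sqrt B + mu) ^ 2,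
    by positivity, by positivity, fun x => ?_⟩
  set u : ℕ → ℂ := fun i => inner ℂ x (f i) with hu_def
  set v : ℕ → ℂ := fun i => inner ℂ x (g i) with hv_def
  set w : ℕ → ℂ := fun i => inner ℂ x (f i - g i) with hw_def
  have hwv : ∀ i, w i = u i - v i := fun i => by
    simp [hw_def, hu_def, hv_def, inner_sub_right]
  -- summability of ∑‖u i‖²
  have hu_sum : Summable (fun i => ‖u i‖ ^ 2) := by
    by_contra hns
    have h0 : (∑' i, ‖u i‖ ^ 2) = 0 := tsum_eq_zero_of_not_summable hns
    have := (hframe x).1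
    rw [h0] at this
    have hx0 : x = 0 := by
      by_contra hx
      have hxn : 0 < ‖x‖ := norm_pos_iff.2 hx
      have : 0 < A * ‖x‖ ^ 2 := by positivity
      linarith
    apply hns
    have : (fun i => ‖u i‖ ^ 2) = fun _ => (0:ℝ) := by
      funext i; simp [hu_def, hx0]
    rw [this]; exact summable_zero
  -- summability of ∑‖w i‖²
  have hper' := hper x
  have hSne : (∑' i, ENNReal.ofReal (‖w i‖ ^ 2)) ≠ ⊤ := by
    intro htop
    rw [htop] at hper'
    have : ((⊤ : ENNReal) ^ ((1:ℝ)/2)) = ⊤ := by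
      simp [ENNReal.top_rpow_of_pos (by norm_num : (0:ℝ) < 1/2)]
    rw [this, top_le_iff] at hper'
    exact ENNReal.ofReal_ne_top hper'
  have hw_sum : Summable (fun i => ‖w i‖ ^ 2) :=
    sq_norm_summable_of_tsum_ofReal_ne_top hSne
  -- real form of the perturbation inequality
  have hD : Real.sqrt (∑' i, ‖w i‖ ^ 2) ≤
      lam * Real.sqrt (∑' i, ‖u i‖ ^ 2) + mu * ‖x‖ := by
    have heq : (∑' i, ENNReal.ofReal (‖w i‖ ^ 2)) =
        ENNReal.ofReal (∑' i, ‖w i‖ ^ 2) :=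
      (ENNReal.ofReal_tsum_of_nonneg (fun i => by positivity) hw_sum).symm
    rw [heq, ENNReal.ofReal_rpow_of_nonneg
      (tsum_nonneg fun i => by positivity) (by norm_num)] at hper'
    rw [Real.sqrt_eq_rpow]
    exact (ENNReal.ofReal_le_ofReal_iff (by positivity)).1 hper'
  -- lp elements
  have hu2 : Memℓp u 2 := memℓp_gen (by
    simpa [ENNReal.toReal_ofNat, Real.rpow_natCast] using hu_sum)
  have hw2 : Memℓp w 2 := memℓp_gen (by
    simpa [ENNReal.toReal_ofNat, Real.rpow_natCast] using hw_sum)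
  have hv2 : Memℓp v 2 := by
    have : v = u - w := by funext i; simp [hwv i]
    rw [this]; exact hu2.sub hw2
  set U : lp (fun _ : ℕ => ℂ) 2 := ⟨u, hu2⟩
  set W : lp (fun _ : ℕ => ℂ) 2 := ⟨w, hw2⟩
  set V : lp (fun _ : ℕ => ℂ) 2 := ⟨v, hv2⟩
  have hVUW : V = U - W := by
    apply Subtype.ext
    funext i
    show v i = u i - w i
    rw [hwv i]; ring
  have hp2 : (0:ℝ) < (2 : ENNReal).toReal := by norm_num
  have hnorm : ∀ (z : ℕ → ℂ) (hz : Memℓp z 2),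
      ‖(⟨z, hz⟩ : lp (fun _ : ℕ => ℂ) 2)‖ = Real.sqrt (∑' i, ‖z i‖ ^ 2) := by
    intro z hz
    rw [lp.norm_eq_tsum_rpow hp2, Real.sqrt_eq_rpow]
    norm_num [Real.rpow_natCast]
  have hUn : ‖U‖ = Real.sqrt (∑' i, ‖u i‖ ^ 2) := hnorm u hu2
  have hWn : ‖W‖ = Real.sqrt (∑' i, ‖w i‖ ^ 2) := hnorm w hw2
  have hVn : ‖V‖ = Real.sqrt (∑' i, ‖v i‖ ^ 2) := hnorm v hv2
  -- bounds on ‖U‖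
  have hUlb : Real.sqrt A * ‖x‖ ≤ ‖U‖ := by
    rw [hUn]
    have : Real.sqrt (A * ‖x‖ ^ 2) ≤ Real.sqrt (∑' i, ‖u i‖ ^ 2) :=
      Real.sqrt_le_sqrt (hframe x).1
    rwa [Real.sqrt_mul hA.le, Real.sqrt_sq (norm_nonneg x)] at this
  have hUub : ‖U‖ ≤ Real.sqrt B * ‖x‖ := by
    rw [hUn]
    have : Real.sqrt (∑' i, ‖u i‖ ^ 2) ≤ Real.sqrt (B * ‖x‖ ^ 2) :=
      Real.sqrt_le_sqrt (hframe x).2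
    rwa [Real.sqrt_mul hB.le, Real.sqrt_sq (norm_nonneg x)] at this
  have hWb : ‖W‖ ≤ lam * ‖U‖ + mu * ‖x‖ := by rw [hWn, hUn]; exact hD
  -- upper bound
  have hVub : ‖V‖ ≤ ((1 + lam) * Real.sqrt B + mu) * ‖x‖ := by
    have h1 : ‖V‖ ≤ ‖U‖ + ‖W‖ := by
      rw [hVUW]; exact (norm_sub_le U W)
    nlinarith [norm_nonneg x]
  -- lower bound
  have hVlb : ((1 - lam) * Real.sqrt A - mu) * ‖x‖ ≤ ‖V‖ := by
    have h1 : ‖U‖ - ‖W‖ ≤ ‖V‖ := by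
      have := norm_sub_le V (-W)
      have h2 : ‖U‖ ≤ ‖V‖ + ‖W‖ := by
        calc ‖U‖ = ‖V + W‖ := by rw [hVUW]; rw [sub_add_cancel]
          _ ≤ ‖V‖ + ‖W‖ := norm_add_le V W
      linarith
    nlinarith [norm_nonneg x]
  have hVsq : ‖V‖ ^ 2 = ∑' i, ‖v i‖ ^ 2 := by
    rw [hVn, Real.sq_sqrt (tsum_nonneg fun i => by positivity)]
  constructor
  · rw [← hVsq]
    calc ((1 - lam) * Real.sqrt A - mu) ^ 2 * ‖x‖ ^ 2
        = (((1 - lam) * Real.sqrt A - mu) * ‖x‖) ^ 2 := by ring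
      _ ≤ ‖V‖ ^ 2 := by
          apply sq_le_sq' _ hVlb
          have : 0 ≤ ((1 - lam) * Real.sqrt A - mu) * ‖x‖ := by positivity
          linarith [norm_nonneg V]
  · rw [← hVsq]
    calc ‖V‖ ^ 2 ≤ (((1 + lam) * Real.sqrt B + mu) * ‖x‖) ^ 2 := by
          apply sq_le_sq' _ hVub
          have := norm_nonneg V; linarith
      _ = ((1 + lam) * Real.sqrt B + mu) ^ 2 * ‖x‖ ^ 2 := by ring
end
end

section
/- Let g ∈ L²(ℝ) and a, b > 0, and suppose the Weyl–Heisenberg system (E_{mb}T_{na}g)_{m,n∈ℤ} is a frame for L²(ℝ) with frame bounds A, B > 0. Then for almost every t ∈ ℝ, A·b ≤ ∑_{n∈ℤ} |g(t − na)|² ≤ B·b. -/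
noncomputable section
open MeasureTheory Complex Set
open scoped ENNReal Real


-- helper: L² lintegral of squared nnnorm finite
lemma lint_sq_lt_top {α : Type*} [MeasurableSpace α] {μ : Measure α} (g : Lp ℂ 2 μ) :
    ∫⁻ x, (‖g x‖₊ : ℝ≥0∞) ^ 2 ∂μ ≠ ⊤ := by
  have h := Lp.eLpNorm_lt_top g
  rw [eLpNorm_eq_lintegral_rpow_enorm_toReal two_ne_zero ENNReal.ofNat_ne_top] at h
  simp only [ENNReal.toReal_ofNat, enorm_eq_nnnorm] at h
  rw [ENNReal.rpow_lt_top_iff_of_pos (by norm_num)] at h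
  have : ∀ x, ((‖g x‖₊ : ℝ≥0∞) : ℝ≥0∞) ^ (2:ℝ) = (‖g x‖₊ : ℝ≥0∞) ^ 2 := by
    intro x; rw [← ENNReal.rpow_natCast]; norm_num
  simp_rw [this] at h
  exact h.ne

lemma row_parseval {T : ℝ} (hT : 0 < T) (c : ℝ) (h : ℝ → ℂ) (hmeas : Measurable h)
    (hL2 : (∫⁻ x in Ioc c (c + T), (‖h x‖₊ : ℝ≥0∞) ^ 2) ≠ ⊤) :
    haveI := Fact.mk hT
    Summable (fun m : ℤ => ‖fourierCoeff (AddCircle.liftIoc T c h) m‖ ^ 2) ∧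
    ∑' m : ℤ, ‖fourierCoeff (AddCircle.liftIoc T c h) m‖ ^ 2 =
      T⁻¹ * (∫⁻ x in Ioc c (c + T), (‖h x‖₊ : ℝ≥0∞) ^ 2).toReal := by
  haveI := Fact.mk hT
  set F : AddCircle T → ℂ := AddCircle.liftIoc T c h with hF
  have hFmeas : Measurable F := by
    have : F = (fun y : Ioc c (c + T) => h y) ∘ (AddCircle.equivIoc T c) := rfl
    rw [this]
    exact (hmeas.comp measurable_subtype_coe).comp
      (AddCircle.measurableEquivIoc T c).measurable
  have hlint : ∫⁻ y, (‖F y‖₊ : ℝ≥0∞) ^ 2 ∂(volume : Measure (AddCircle T))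
      = ∫⁻ x in Ioc c (c + T), (‖h x‖₊ : ℝ≥0∞) ^ 2 := by
    rw [← AddCircle.lintegral_preimage T c (fun y => (‖F y‖₊ : ℝ≥0∞) ^ 2)]
    refine setLIntegral_congr_fun measurableSet_Ioc (fun x hx => ?_)
    rw [hF, AddCircle.liftIoc_coe_apply hx]
  have hmem : MemLp F 2 (volume : Measure (AddCircle T)) := by
    refine ⟨hFmeas.aestronglyMeasurable, ?_⟩
    rw [eLpNorm_eq_lintegral_rpow_enorm_toReal two_ne_zero ENNReal.ofNat_ne_top]
    simp only [ENNReal.toReal_ofNat, enorm_eq_nnnorm]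
    rw [ENNReal.rpow_lt_top_iff_of_pos (by norm_num : (0:ℝ) < 1/2)]
    have : ∀ y, ((‖F y‖₊ : ℝ≥0∞)) ^ (2:ℝ) = (‖F y‖₊ : ℝ≥0∞) ^ 2 := by
      intro x; rw [← ENNReal.rpow_natCast]; norm_num
    simp_rw [this, hlint]
    exact hL2.lt_top
  have hhaar : (AddCircle.haarAddCircle : Measure (AddCircle T))
      = (ENNReal.ofReal T)⁻¹ • (volume : Measure (AddCircle T)) := by
    rw [AddCircle.volume_eq_smul_haarAddCircle, smul_smul,
      ENNReal.inv_mul_cancel (by simpa using hT) ENNReal.ofReal_ne_top, one_smul]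
  have hmemh : MemLp F 2 (AddCircle.haarAddCircle) := by
    rw [hhaar]; exact hmem.smul_measure (by simp [hT])
  set H : Lp ℂ 2 (AddCircle.haarAddCircle (T := T)) := hmemh.toLp F with hH
  have hHae : ⇑H =ᵐ[AddCircle.haarAddCircle] F := hmemh.coeFn_toLp
  have hcoeff : ∀ m : ℤ, fourierCoeff (⇑H) m = fourierCoeff F m := by
    intro m
    unfold fourierCoeff
    refine integral_congr_ae ?_
    filter_upwards [hHae] with t ht
    rw [ht]
  have hrpow : ∀ x : ℝ, x ^ ((2:ℝ≥0∞).toReal) = x ^ 2 := by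
    intro x
    rw [show ((2:ℝ≥0∞).toReal) = ((2:ℕ):ℝ) by norm_num, Real.rpow_natCast]
  have hsum : Summable (fun m : ℤ => ‖fourierCoeff F m‖ ^ 2) := by
    have hmm : Memℓp (⇑(fourierBasis.repr H)) 2 := (fourierBasis.repr H).property
    rw [memℓp_gen_iff (by norm_num : 0 < (2:ℝ≥0∞).toReal)] at hmm
    have he : ∀ i : ℤ, ‖(fourierBasis.repr H) i‖ ^ ((2:ℝ≥0∞).toReal) = ‖fourierCoeff F i‖ ^ 2 := by
      intro i
      rw [fourierBasis_repr, hcoeff, hrpow]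
    simpa only [he] using hmm
  refine ⟨by simpa only [hcoeff] using hsum, ?_⟩
  have hts := tsum_sq_fourierCoeff H
  simp only [hcoeff] at hts
  rw [hts]
  have h1 : ∫ t, ‖H t‖ ^ 2 ∂(AddCircle.haarAddCircle)
      = ∫ t, ‖F t‖ ^ 2 ∂(AddCircle.haarAddCircle) := by
    refine integral_congr_ae ?_
    filter_upwards [hHae] with t ht
    rw [ht]
  rw [h1, hhaar, integral_smul_measure, ENNReal.toReal_inv, ENNReal.toReal_ofReal hT.le,
    smul_eq_mul]
  congr 1
  rw [integral_eq_lintegral_of_nonneg_ae (ae_of_all _ fun t => sq_nonneg _)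
    ((hFmeas.norm.pow_const 2).aestronglyMeasurable), ← hlint]
  congr 1
  refine lintegral_congr fun t => ?_
  rw [ENNReal.ofReal_pow (norm_nonneg _), ofReal_norm_eq_enorm, enorm_eq_nnnorm]

lemma inner_eq_coeff {b : ℝ} (hb : 0 < b) (c : ℝ)
    (g : Lp ℂ 2 (volume : Measure ℝ)) (a : ℝ) (m n : ℤ)
    (gmn : Lp ℂ 2 (volume : Measure ℝ))
    (hgmn : ∀ᵐ x : ℝ, gmn x
      = Complex.exp (2 * Real.pi * Complex.I * (m : ℂ) * (b : ℂ) * (x : ℂ)) * g (x - n * a))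
    (E : Set ℝ) (hE : MeasurableSet E) (hμE : volume E ≠ ⊤) (hEsub : E ⊆ Ioc c (c + 1/b)) :
    haveI := Fact.mk (by positivity : (0:ℝ) < 1/b)
    (inner ℂ (indicatorConstLp 2 hE hμE (1:ℂ)) gmn : ℂ)
      = ((1/b : ℝ) : ℂ) *
        fourierCoeff (AddCircle.liftIoc (1/b) c (E.indicator (fun x => g (x - n * a)))) (-m) := by
  haveI := Fact.mk (by positivity : (0:ℝ) < 1/b)
  set T : ℝ := 1/b with hTdef
  set e : ℝ → ℂ := fun x => Complex.exp (2 * Real.pi * Complex.I * (m : ℂ) * (b : ℂ) * (x : ℂ))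
    with he
  set hn : ℝ → ℂ := E.indicator (fun x => g (x - n * a)) with hhn
  set f : Lp ℂ 2 (volume : Measure ℝ) := indicatorConstLp 2 hE hμE (1:ℂ) with hf
  -- step 1 : inner = ∫ x in Ioc c (c+T), e x * hn x
  have step1 : (inner ℂ f gmn : ℂ) = ∫ x in Ioc c (c + T), e x * hn x := by
    rw [MeasureTheory.L2.inner_def]
    have hcongr : (fun x => (inner ℂ (f x) (gmn x) : ℂ))
        =ᵐ[volume] (Ioc c (c + T)).indicator (fun x => e x * hn x) := by
      filter_upwards [hgmn, indicatorConstLp_coeFn (p := 2) (μ := (volume : Measure ℝ))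
        (s := E) (hs := hE) (hμs := hμE) (c := (1:ℂ))] with x hx hfx
      rw [RCLike.inner_apply, hx, hfx]
      by_cases hxE : x ∈ E
      · rw [Set.indicator_of_mem hxE, Set.indicator_of_mem (hEsub hxE), hhn,
          Set.indicator_of_mem hxE]
        simp [he]
      · rw [Set.indicator_of_notMem hxE]
        by_cases hxI : x ∈ Ioc c (c + T)
        · rw [Set.indicator_of_mem hxI, hhn, Set.indicator_of_notMem hxE, mul_zero]
          simp
        · rw [Set.indicator_of_notMem hxI]
          simp
    rw [integral_congr_ae hcongr, integral_indicator measurableSet_Ioc]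
  -- step 2 : fourierCoeff of lift
  have step2 : fourierCoeff (AddCircle.liftIoc T c hn) (-m)
      = ((1/T : ℝ) : ℂ) * ∫ x in Ioc c (c + T), e x * hn x := by
    rw [fourierCoeff_eq_intervalIntegral _ (-m) c, neg_neg,
      intervalIntegral.integral_of_le (by linarith [hb, one_div_pos.mpr hb] : c ≤ c + T)]
    rw [Complex.real_smul]
    congr 1
    refine setIntegral_congr_fun measurableSet_Ioc fun x hx => ?_
    rw [AddCircle.liftIoc_coe_apply hx, smul_eq_mul]
    congr 1
    rw [fourier_coe_apply, he]
    congr 1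
    have hb' : (b:ℂ) ≠ 0 := by exact_mod_cast hb.ne'
    field_simp [hTdef]
    simp [hTdef]
  rw [step1, step2, hTdef]
  have hb' : (b:ℂ) ≠ 0 := by exact_mod_cast hb.ne'
  push_cast
  field_simp

lemma key_bound
    (g : Lp ℂ 2 (volume : Measure ℝ)) (a b : ℝ) (hb : 0 < b)
    (gab : ℤ → ℤ → Lp ℂ 2 (volume : Measure ℝ))
    (hgab : ∀ m n : ℤ, ∀ᵐ x : ℝ,
      gab m n x = Complex.exp (2 * Real.pi * Complex.I * (m : ℂ) * (b : ℂ) * (x : ℂ)) *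
        g (x - n * a))
    (A B : ℝ) (hA : 0 < A)
    (hframe : ∀ f : Lp ℂ 2 (volume : Measure ℝ),
      A * ‖f‖ ^ 2 ≤ ∑' p : ℤ × ℤ, ‖(inner ℂ f (gab p.1 p.2) : ℂ)‖ ^ 2 ∧
      ∑' p : ℤ × ℤ, ‖(inner ℂ f (gab p.1 p.2) : ℂ)‖ ^ 2 ≤ B * ‖f‖ ^ 2)
    (c : ℝ) (E : Set ℝ) (hE : MeasurableSet E) (hEsub : E ⊆ Ioc c (c + 1/b)) :
    ENNReal.ofReal (A * b) * volume E ≤ (∫⁻ t in E, ∑' n : ℤ, (‖g (t - n * a)‖₊ : ℝ≥0∞) ^ 2) ∧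
    (∫⁻ t in E, ∑' n : ℤ, (‖g (t - n * a)‖₊ : ℝ≥0∞) ^ 2) ≤ ENNReal.ofReal (B * b) * volume E := by
  have hT : (0:ℝ) < 1/b := by positivity
  haveI := Fact.mk hT
  set T : ℝ := 1/b with hTdef
  have hμE : volume E ≠ ⊤ :=
    (lt_of_le_of_lt (measure_mono hEsub) measure_Ioc_lt_top).ne
  set f : Lp ℂ 2 (volume : Measure ℝ) := indicatorConstLp 2 hE hμE (1:ℂ) with hfdef
  have hnorm : ‖f‖ ^ 2 = (volume E).toReal := by
    rw [hfdef, norm_indicatorConstLp two_ne_zero ENNReal.ofNat_ne_top]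
    simp only [norm_one, one_mul, ENNReal.toReal_ofNat]
    rw [← Real.rpow_natCast _ 2, ← Real.rpow_mul measureReal_nonneg]
    norm_num [measureReal_def]
  have hgm : ∀ n : ℤ, Measurable (fun x : ℝ => g (x - n * a)) := fun n =>
    (Lp.stronglyMeasurable g).measurable.comp (measurable_id.sub measurable_const)
  -- per-n data
  set hn : ℤ → ℝ → ℂ := fun n => E.indicator (fun x => g (x - n * a)) with hhn
  have hnmeas : ∀ n : ℤ, Measurable (hn n) := fun n => (hgm n).indicator hE
  set dn : ℤ → ℝ≥0∞ := fun n => ∫⁻ x in E, (‖g (x - n * a)‖₊ : ℝ≥0∞) ^ 2 with hdn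
  have hc_eq : ∀ n : ℤ, (∫⁻ x in Ioc c (c + T), (‖hn n x‖₊ : ℝ≥0∞) ^ 2) = dn n := by
    intro n
    have hpt : (fun x => (‖hn n x‖₊ : ℝ≥0∞) ^ 2)
        = E.indicator (fun x => (‖g (x - n * a)‖₊ : ℝ≥0∞) ^ 2) := by
      funext x
      by_cases hx : x ∈ E
      · rw [hhn]; simp only [Set.indicator_of_mem hx]
      · rw [hhn]; simp only [Set.indicator_of_notMem hx]; simp
    rw [hpt, lintegral_indicator hE, Measure.restrict_restrict hE,
      Set.inter_eq_self_of_subset_left hEsub]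
  have hdn_ne : ∀ n : ℤ, dn n ≠ ⊤ := by
    intro n
    have h1 : dn n ≤ ∫⁻ x, (‖g (x - n * a)‖₊ : ℝ≥0∞) ^ 2 :=
      setLIntegral_le_lintegral _ _
    have h2 : (∫⁻ x, (‖g (x - n * a)‖₊ : ℝ≥0∞) ^ 2) = ∫⁻ x, (‖g x‖₊ : ℝ≥0∞) ^ 2 := by
      have := lintegral_add_right_eq_self (μ := volume)
        (fun x : ℝ => (‖g x‖₊ : ℝ≥0∞) ^ 2) (-(n * a))
      simp_rw [← sub_eq_add_neg] at this
      exact this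
    exact (lt_of_le_of_lt h1 (h2 ▸ (lint_sq_lt_top g).lt_top)).ne
  have hrow : ∀ n : ℤ,
      Summable (fun m : ℤ => ‖fourierCoeff (AddCircle.liftIoc T c (hn n)) m‖ ^ 2) ∧
      ∑' m : ℤ, ‖fourierCoeff (AddCircle.liftIoc T c (hn n)) m‖ ^ 2
        = T⁻¹ * (∫⁻ x in Ioc c (c + T), (‖hn n x‖₊ : ℝ≥0∞) ^ 2).toReal := fun n =>
    row_parseval hT c (hn n) (hnmeas n) ((hc_eq n) ▸ hdn_ne n)
  have hinner : ∀ m n : ℤ, (inner ℂ f (gab m n) : ℂ)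
      = ((T : ℝ) : ℂ) * fourierCoeff (AddCircle.liftIoc T c (hn n)) (-m) :=
    fun m n => inner_eq_coeff hb c g a m n (gab m n) (hgab m n) E hE hμE hEsub
  have hval : ∀ m n : ℤ, ‖(inner ℂ f (gab m n) : ℂ)‖ ^ 2
      = T ^ 2 * ‖fourierCoeff (AddCircle.liftIoc T c (hn n)) (-m)‖ ^ 2 := by
    intro m n
    rw [hinner, norm_mul, mul_pow, Complex.norm_real, Real.norm_eq_abs, abs_of_pos hT]
  have rowSummable : ∀ n : ℤ, Summable (fun m : ℤ => ‖(inner ℂ f (gab m n) : ℂ)‖ ^ 2) := by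
    intro n
    have h1 := ((hrow n).1.mul_left (T ^ 2))
    have h2 : Summable ((fun m' : ℤ =>
        T ^ 2 * ‖fourierCoeff (AddCircle.liftIoc T c (hn n)) m'‖ ^ 2) ∘ (Equiv.neg ℤ)) :=
      ((Equiv.neg ℤ).summable_iff).mpr h1
    refine h2.congr fun m => ?_
    simp only [Function.comp_apply, Equiv.neg_apply]
    exact (hval m n).symm
  have rowTsum : ∀ n : ℤ, ∑' m : ℤ, ‖(inner ℂ f (gab m n) : ℂ)‖ ^ 2 = T * (dn n).toReal := by
    intro n
    simp_rw [hval]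
    rw [tsum_mul_left]
    have hre : ∑' m : ℤ, ‖fourierCoeff (AddCircle.liftIoc T c (hn n)) (-m)‖ ^ 2
        = ∑' m : ℤ, ‖fourierCoeff (AddCircle.liftIoc T c (hn n)) m‖ ^ 2 := by
      exact (Equiv.neg ℤ).tsum_eq fun m' =>
        ‖fourierCoeff (AddCircle.liftIoc T c (hn n)) m'‖ ^ 2
    rw [hre, (hrow n).2, hc_eq n]
    have : T ^ 2 * T⁻¹ = T := by field_simp
    rw [← mul_assoc, this]
  set L : ℝ≥0∞ := ∫⁻ t in E, ∑' n : ℤ, (‖g (t - n * a)‖₊ : ℝ≥0∞) ^ 2 with hL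
  have hSenn : ∑' p : ℤ × ℤ, ENNReal.ofReal (‖(inner ℂ f (gab p.1 p.2) : ℂ)‖ ^ 2)
      = ENNReal.ofReal T * L := by
    rw [ENNReal.tsum_prod'
        (f := fun p : ℤ × ℤ => ENNReal.ofReal (‖(inner ℂ f (gab p.1 p.2) : ℂ)‖ ^ 2)),
      ENNReal.tsum_comm]
    have hrowe : ∀ n : ℤ, ∑' m : ℤ, ENNReal.ofReal (‖(inner ℂ f (gab m n) : ℂ)‖ ^ 2)
        = ENNReal.ofReal T * dn n := by
      intro n
      rw [← ENNReal.ofReal_tsum_of_nonneg (fun m => sq_nonneg _) (rowSummable n),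
        rowTsum n, ENNReal.ofReal_mul hT.le, ENNReal.ofReal_toReal (hdn_ne n)]
    simp_rw [hrowe]
    rw [ENNReal.tsum_mul_left]
    congr 1
    rw [hdn, hL, ← lintegral_tsum]
    intro n
    exact (((hgm n).nnnorm.coe_nnreal_ennreal).pow_const 2).aemeasurable
  have hframe' := hframe f
  rw [hnorm] at hframe'
  by_cases hE0 : volume E = 0
  · have hLzero : L = 0 := by
      rw [hL, Measure.restrict_eq_zero.mpr hE0, lintegral_zero_measure]
    rw [hLzero, hE0]
    simp
  have hvpos : 0 < (volume E).toReal := ENNReal.toReal_pos hE0 hμE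
  by_cases hsumm : Summable (fun p : ℤ × ℤ => ‖(inner ℂ f (gab p.1 p.2) : ℂ)‖ ^ 2)
  · have hR : ENNReal.ofReal (∑' p : ℤ × ℤ, ‖(inner ℂ f (gab p.1 p.2) : ℂ)‖ ^ 2)
        = ENNReal.ofReal T * L := by
      rw [ENNReal.ofReal_tsum_of_nonneg (fun p => sq_nonneg _) hsumm, hSenn]
    have hbT : ENNReal.ofReal b * ENNReal.ofReal T = 1 := by
      rw [← ENNReal.ofReal_mul hb.le, hTdef]
      rw [mul_one_div, div_self hb.ne']
      exact ENNReal.ofReal_one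
    constructor
    · have h1 : ENNReal.ofReal (A * (volume E).toReal)
          ≤ ENNReal.ofReal T * L := by
        rw [← hR]; exact ENNReal.ofReal_le_ofReal hframe'.1
      rw [ENNReal.ofReal_mul hA.le, ENNReal.ofReal_toReal hμE] at h1
      calc ENNReal.ofReal (A * b) * volume E
          = ENNReal.ofReal b * (ENNReal.ofReal A * volume E) := by
            rw [ENNReal.ofReal_mul hA.le, ← mul_assoc, mul_comm (ENNReal.ofReal A)]
        _ ≤ ENNReal.ofReal b * (ENNReal.ofReal T * L) := mul_le_mul_right h1 _
        _ = L := by rw [← mul_assoc, hbT, one_mul]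
    · have h1 : ENNReal.ofReal T * L
          ≤ ENNReal.ofReal (B * (volume E).toReal) := by
        rw [← hR]; exact ENNReal.ofReal_le_ofReal hframe'.2
      have hB0 : (0:ℝ) ≤ B := by nlinarith [hframe'.1, hframe'.2]
      rw [ENNReal.ofReal_mul hB0, ENNReal.ofReal_toReal hμE] at h1
      calc L = ENNReal.ofReal b * (ENNReal.ofReal T * L) := by
            rw [← mul_assoc, hbT, one_mul]
        _ ≤ ENNReal.ofReal b * (ENNReal.ofReal B * volume E) := mul_le_mul_right h1 _
        _ = ENNReal.ofReal (B * b) * volume E := by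
            rw [ENNReal.ofReal_mul hB0, ← mul_assoc, mul_comm (ENNReal.ofReal b)]
  · have hzero : (∑' p : ℤ × ℤ, ‖(inner ℂ f (gab p.1 p.2) : ℂ)‖ ^ 2) = 0 :=
      tsum_eq_zero_of_not_summable hsumm
    rw [hzero] at hframe'
    exact absurd hframe'.1 (by nlinarith)

lemma exists_mem_Ioc_int (T : ℝ) (hT : 0 < T) (t : ℝ) :
    ∃ k : ℤ, t ∈ Ioc ((k : ℝ) * T) ((k : ℝ) * T + T) := by
  refine ⟨⌈t / T⌉ - 1, ?_, ?_⟩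
  · push_cast
    have hx1 : ((⌈t / T⌉ : ℝ) - 1) < t / T := by linarith [Int.ceil_lt_add_one (t / T)]
    calc ((⌈t / T⌉ : ℝ) - 1) * T < (t / T) * T := by
          exact mul_lt_mul_of_pos_right hx1 hT
      _ = t := by field_simp
  · push_cast
    have hx2 : t / T ≤ (⌈t / T⌉ : ℝ) := Int.le_ceil _
    have : t ≤ (⌈t / T⌉ : ℝ) * T := by
      calc t = (t / T) * T := by field_simp
        _ ≤ (⌈t / T⌉ : ℝ) * T := mul_le_mul_of_nonneg_right hx2 hT.le
    linarith

/-- Necessary condition for a Weyl–Heisenberg frame: if the Gabor system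
`(E_{mb}T_{na}g)_{m,n ∈ ℤ}` is a frame for `L²(ℝ)` with frame bounds `A, B`,
then `A·b ≤ ∑ₙ |g(t - na)|² ≤ B·b` for almost every `t`. -/
theorem wh_frame_necessary_condition
    (g : Lp ℂ 2 (volume : Measure ℝ)) (a b : ℝ) (ha : 0 < a) (hb : 0 < b)
    (gab : ℤ → ℤ → Lp ℂ 2 (volume : Measure ℝ))
    (hgab : ∀ m n : ℤ, ∀ᵐ x : ℝ,
      gab m n x = Complex.exp (2 * Real.pi * Complex.I * (m : ℂ) * (b : ℂ) * (x : ℂ)) *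
        g (x - n * a))
    (A B : ℝ) (hA : 0 < A) (hB : 0 < B)
    (hframe : ∀ f : Lp ℂ 2 (volume : Measure ℝ),
      A * ‖f‖ ^ 2 ≤ ∑' p : ℤ × ℤ, ‖(inner ℂ f (gab p.1 p.2) : ℂ)‖ ^ 2 ∧
      ∑' p : ℤ × ℤ, ‖(inner ℂ f (gab p.1 p.2) : ℂ)‖ ^ 2 ≤ B * ‖f‖ ^ 2) :
    ∀ᵐ t : ℝ,
      A * b ≤ ∑' n : ℤ, ‖g (t - n * a)‖ ^ 2 ∧
      ∑' n : ℤ, ‖g (t - n * a)‖ ^ 2 ≤ B * b := by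
  have hT : (0:ℝ) < 1/b := by positivity
  set T : ℝ := 1/b with hTdef
  set G : ℝ → ℝ≥0∞ := fun t => ∑' n : ℤ, (‖g (t - n * a)‖₊ : ℝ≥0∞) ^ 2 with hGdef
  have hgm : ∀ n : ℤ, Measurable (fun x : ℝ => g (x - n * a)) := fun n =>
    (Lp.stronglyMeasurable g).measurable.comp (measurable_id.sub measurable_const)
  have hGmeas : Measurable G :=
    Measurable.ennreal_tsum fun n => ((hgm n).nnnorm.coe_nnreal_ennreal).pow_const 2
  have key : ∀ (c : ℝ) (E : Set ℝ), MeasurableSet E → E ⊆ Ioc c (c + T) →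
      ENNReal.ofReal (A * b) * volume E ≤ (∫⁻ t in E, G t) ∧
      (∫⁻ t in E, G t) ≤ ENNReal.ofReal (B * b) * volume E :=
    fun c E hE hsub => key_bound g a b hb gab hgab A B hA hframe c E hE hsub
  -- upper bad sets
  have hup : ∀ k : ℤ, ∀ q : ℚ, B * b < (q : ℝ) →
      volume {t : ℝ | t ∈ Ioc ((k : ℝ) * T) ((k : ℝ) * T + T) ∧ ENNReal.ofReal q ≤ G t}
        = 0 := by
    intro k q hq
    set E := {t : ℝ | t ∈ Ioc ((k : ℝ) * T) ((k : ℝ) * T + T) ∧ ENNReal.ofReal q ≤ G t}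
      with hEdef
    have hE : MeasurableSet E := measurableSet_Ioc.inter (hGmeas measurableSet_Ici)
    have hsub : E ⊆ Ioc ((k : ℝ) * T) ((k : ℝ) * T + T) := fun t ht => ht.1
    have hμE : volume E ≠ ⊤ := (lt_of_le_of_lt (measure_mono hsub) measure_Ioc_lt_top).ne
    have hk := key ((k : ℝ) * T) E hE hsub
    have hlow : ENNReal.ofReal q * volume E ≤ ∫⁻ t in E, G t := by
      calc ENNReal.ofReal q * volume E = ∫⁻ _ in E, ENNReal.ofReal q := by
            rw [setLIntegral_const]
        _ ≤ ∫⁻ t in E, G t := setLIntegral_mono hGmeas fun t ht => ht.2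
    by_contra hne
    have hv0 : volume E ≠ 0 := hne
    have hlt : ENNReal.ofReal (B * b) < ENNReal.ofReal q :=
      (ENNReal.ofReal_lt_ofReal_iff_of_nonneg (by positivity)).mpr hq
    have h2 : ENNReal.ofReal (B * b) * volume E < ENNReal.ofReal q * volume E :=
      (ENNReal.mul_lt_mul_iff_left hv0 hμE).mpr hlt
    exact absurd (le_trans hlow hk.2) (not_le.mpr h2)
  -- lower bad sets
  have hlo : ∀ k : ℤ, ∀ q : ℚ, (q : ℝ) < A * b →
      volume {t : ℝ | t ∈ Ioc ((k : ℝ) * T) ((k : ℝ) * T + T) ∧ G t ≤ ENNReal.ofReal q}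
        = 0 := by
    intro k q hq
    set E := {t : ℝ | t ∈ Ioc ((k : ℝ) * T) ((k : ℝ) * T + T) ∧ G t ≤ ENNReal.ofReal q}
      with hEdef
    have hE : MeasurableSet E := measurableSet_Ioc.inter (hGmeas measurableSet_Iic)
    have hsub : E ⊆ Ioc ((k : ℝ) * T) ((k : ℝ) * T + T) := fun t ht => ht.1
    have hμE : volume E ≠ ⊤ := (lt_of_le_of_lt (measure_mono hsub) measure_Ioc_lt_top).ne
    have hk := key ((k : ℝ) * T) E hE hsub
    have hhigh : (∫⁻ t in E, G t) ≤ ENNReal.ofReal q * volume E := by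
      calc (∫⁻ t in E, G t) ≤ ∫⁻ _ in E, ENNReal.ofReal q :=
            setLIntegral_mono measurable_const fun t ht => ht.2
        _ = ENNReal.ofReal q * volume E := by rw [setLIntegral_const]
    by_contra hne
    have hv0 : volume E ≠ 0 := hne
    have hlt : ENNReal.ofReal q < ENNReal.ofReal (A * b) :=
      (ENNReal.ofReal_lt_ofReal_iff (by positivity)).mpr hq
    have h2 : ENNReal.ofReal q * volume E < ENNReal.ofReal (A * b) * volume E :=
      (ENNReal.mul_lt_mul_iff_left hv0 hμE).mpr hlt
    exact absurd (le_trans hk.1 hhigh) (not_le.mpr h2)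
  -- a.e. bounds on G
  have hae : ∀ᵐ t : ℝ, ENNReal.ofReal (A * b) ≤ G t ∧ G t ≤ ENNReal.ofReal (B * b) := by
    have hbadlow : volume {t : ℝ | G t < ENNReal.ofReal (A * b)} = 0 := by
      refine measure_mono_null (t := ⋃ (k : ℤ) (q : ℚ),
        if (q : ℝ) < A * b then
          {t : ℝ | t ∈ Ioc ((k : ℝ) * T) ((k : ℝ) * T + T) ∧ G t ≤ ENNReal.ofReal q}
        else ∅) ?_ ?_
      · intro t ht
        simp only [Set.mem_setOf_eq] at ht
        obtain ⟨k, hk⟩ := exists_mem_Ioc_int T hT t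
        obtain ⟨q, hq0, hq1, hq2⟩ := ENNReal.lt_iff_exists_rat_btwn.mp ht
        have hq0' : (0:ℝ) ≤ (q:ℝ) := by exact_mod_cast hq0
        have hcoe : (((q:ℝ).toNNReal : ℝ≥0∞)) = ENNReal.ofReal (q:ℝ) := rfl
        rw [hcoe] at hq1 hq2
        have hq2' : (q : ℝ) < A * b :=
          (ENNReal.ofReal_lt_ofReal_iff_of_nonneg hq0').mp hq2
        refine Set.mem_iUnion.mpr ⟨k, Set.mem_iUnion.mpr ⟨q, ?_⟩⟩
        rw [if_pos hq2']
        exact ⟨hk, hq1.le⟩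
      · refine measure_iUnion_null fun k => measure_iUnion_null fun q => ?_
        by_cases hq : (q : ℝ) < A * b
        · rw [if_pos hq]; exact hlo k q hq
        · rw [if_neg hq]; simp
    have hbadhigh : volume {t : ℝ | ENNReal.ofReal (B * b) < G t} = 0 := by
      refine measure_mono_null (t := ⋃ (k : ℤ) (q : ℚ),
        if B * b < (q : ℝ) then
          {t : ℝ | t ∈ Ioc ((k : ℝ) * T) ((k : ℝ) * T + T) ∧ ENNReal.ofReal q ≤ G t}
        else ∅) ?_ ?_
      · intro t ht
        simp only [Set.mem_setOf_eq] at ht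
        obtain ⟨k, hk⟩ := exists_mem_Ioc_int T hT t
        obtain ⟨q, hq0, hq1, hq2⟩ := ENNReal.lt_iff_exists_rat_btwn.mp ht
        have hcoe : (((q:ℝ).toNNReal : ℝ≥0∞)) = ENNReal.ofReal (q:ℝ) := rfl
        rw [hcoe] at hq1 hq2
        have hq1' : B * b < (q : ℝ) :=
          (ENNReal.ofReal_lt_ofReal_iff_of_nonneg (by positivity)).mp hq1
        refine Set.mem_iUnion.mpr ⟨k, Set.mem_iUnion.mpr ⟨q, ?_⟩⟩
        rw [if_pos hq1']
        exact ⟨hk, hq2.le⟩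
      · refine measure_iUnion_null fun k => measure_iUnion_null fun q => ?_
        by_cases hq : B * b < (q : ℝ)
        · rw [if_pos hq]; exact hup k q hq
        · rw [if_neg hq]; simp
    rw [MeasureTheory.ae_iff]
    refine measure_mono_null (t := {t : ℝ | G t < ENNReal.ofReal (A * b)}
      ∪ {t : ℝ | ENNReal.ofReal (B * b) < G t}) ?_ ?_
    · intro t ht
      simp only [Set.mem_setOf_eq, not_and_or, not_le] at ht
      rcases ht with h | h
      · exact Or.inl h
      · exact Or.inr h
    · exact measure_union_null hbadlow hbadhigh
  -- conclude
  filter_upwards [hae] with t ht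
  obtain ⟨h1, h2⟩ := ht
  have hfin : G t ≠ ⊤ := (lt_of_le_of_lt h2 ENNReal.ofReal_lt_top).ne
  have hterm : ∀ n : ℤ, ((‖g (t - n * a)‖₊ : ℝ≥0∞) ^ 2) ≠ ⊤ := fun n => by
    simp [ENNReal.pow_ne_top]
  have htsum : (G t).toReal = ∑' n : ℤ, ‖g (t - n * a)‖ ^ 2 := by
    rw [hGdef]
    rw [ENNReal.tsum_toReal_eq hterm]
    exact tsum_congr fun n => by
      rw [ENNReal.toReal_pow, ENNReal.coe_toReal, coe_nnnorm]
  constructor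
  · have := ENNReal.toReal_mono hfin h1
    rwa [ENNReal.toReal_ofReal (by positivity), htsum] at this
  · have := ENNReal.toReal_mono ENNReal.ofReal_ne_top h2
    rwa [ENNReal.toReal_ofReal (by positivity), htsum] at this
end
end
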